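/- arXiv:1707.05918 — 14 statements merged into one kernel-verified Lean document; each statement's English description precedes it below -/
import Mathlib

section
/- In the real quaternions, the product α̲·β̲ equals Q_L(0) − [q] − qΔω, i.e. α̲β̲ = (L(0) + L(1)i + L(2)j + L(3)k) − (1 − q + q² − q³) − qΔ(qi + pj − k). -/
open Quaternion

theorem stmt_0 (p q : ℝ) (hpq : 0 < p^2 + 4*q)
    (α β : ℝ)
    (hα : α = (p + Real.sqrt (p^2 + 4*q)) / 2)
    (hβ : β = (p - Real.sqrt (p^2 + 4*q)) / 2)
    (Δ : ℝ) (hΔ : Δ = α - β)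
    (L : ℤ → ℝ) (hL0 : L 0 = 2) (hL1 : L 1 = p)
    (hL : ∀ n : ℤ, L (n+2) = p * L (n+1) + q * L n)
    (i j k : ℍ[ℝ])
    (hi : i = ⟨0,1,0,0⟩) (hj : j = ⟨0,0,1,0⟩) (hk : k = ⟨0,0,0,1⟩)
    (QL : ℤ → ℍ[ℝ])
    (hQL : ∀ n : ℤ, QL n = ((L n : ℝ) : ℍ[ℝ]) + ((L (n+1) : ℝ) : ℍ[ℝ]) * i
      + ((L (n+2) : ℝ) : ℍ[ℝ]) * j + ((L (n+3) : ℝ) : ℍ[ℝ]) * k)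
    (ω : ℍ[ℝ]) (hω : ω = ((q : ℝ) : ℍ[ℝ]) * i + ((p : ℝ) : ℍ[ℝ]) * j - k)
    (uα : ℍ[ℝ])
    (huα : uα = 1 + ((α : ℝ) : ℍ[ℝ]) * i + ((α^2 : ℝ) : ℍ[ℝ]) * j + ((α^3 : ℝ) : ℍ[ℝ]) * k)
    (uβ : ℍ[ℝ])
    (huβ : uβ = 1 + ((β : ℝ) : ℍ[ℝ]) * i + ((β^2 : ℝ) : ℍ[ℝ]) * j + ((β^3 : ℝ) : ℍ[ℝ]) * k) :
    uα * uβ = QL 0 - ((1 - q + q^2 - q^3 : ℝ) : ℍ[ℝ]) - ((q * Δ : ℝ) : ℍ[ℝ]) * ω := by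
  have hs : Real.sqrt (p^2+4*q) ^ 2 = p^2 + 4*q := Real.sq_sqrt hpq.le
  have hp : p = α + β := by rw [hα, hβ]; ring
  have hq : q = -(α*β) := by
    rw [hα, hβ]
    linear_combination (-1/4 : ℝ) * hs
  have h2 : L 2 = p * L 1 + q * L 0 := by have := hL 0; norm_num at this; exact this
  have h3 : L 3 = p * L 2 + q * L 1 := by have := hL 1; norm_num at this; exact this
  have hQL0 := hQL 0
  norm_num at hQL0
  obtain ⟨hi0, hi1, hi2, hi3⟩ : i.re = 0 ∧ i.imI = 1 ∧ i.imJ = 0 ∧ i.imK = 0 := by subst hi; exact ⟨rfl, rfl, rfl, rfl⟩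
  obtain ⟨hj0, hj1, hj2, hj3⟩ : j.re = 0 ∧ j.imI = 0 ∧ j.imJ = 1 ∧ j.imK = 0 := by subst hj; exact ⟨rfl, rfl, rfl, rfl⟩
  obtain ⟨hk0, hk1, hk2, hk3⟩ : k.re = 0 ∧ k.imI = 0 ∧ k.imJ = 0 ∧ k.imK = 1 := by subst hk; exact ⟨rfl, rfl, rfl, rfl⟩
  rw [hQL0, huα, huβ, hω, h3, h2, hL0, hL1, hΔ, hp, hq]
  apply Quaternion.ext <;> simp only [Quaternion.re_mul, Quaternion.imI_mul, Quaternion.imJ_mul, Quaternion.imK_mul, Quaternion.re_add, Quaternion.imI_add, Quaternion.imJ_add, Quaternion.imK_add, Quaternion.re_sub, Quaternion.imI_sub, Quaternion.imJ_sub, Quaternion.imK_sub, Quaternion.re_one, Quaternion.imI_one, Quaternion.imJ_one, Quaternion.imK_one, Quaternion.re_coe, Quaternion.imI_coe, Quaternion.imJ_coe, Quaternion.imK_coe, hi0, hi1, hi2, hi3, hj0, hj1, hj2, hj3, hk0, hk1, hk2, hk3] <;> ring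
end

section
/- In the real quaternions, the product β̲·α̲ equals Q_L(0) − [q] + qΔω, i.e. β̲α̲ = (L(0) + L(1)i + L(2)j + L(3)k) − (1 − q + q² − q³) + qΔ(qi + pj − k). -/
open Quaternion

theorem stmt_1 (p q : ℝ) (hpq : 0 < p^2 + 4*q)
    (α β : ℝ)
    (hα : α = (p + Real.sqrt (p^2 + 4*q)) / 2)
    (hβ : β = (p - Real.sqrt (p^2 + 4*q)) / 2)
    (Δ : ℝ) (hΔ : Δ = α - β)
    (L : ℤ → ℝ) (hL0 : L 0 = 2) (hL1 : L 1 = p)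
    (hL : ∀ n : ℤ, L (n+2) = p * L (n+1) + q * L n)
    (i j k : ℍ[ℝ])
    (hi : i = ⟨0,1,0,0⟩) (hj : j = ⟨0,0,1,0⟩) (hk : k = ⟨0,0,0,1⟩)
    (QL : ℤ → ℍ[ℝ])
    (hQL : ∀ n : ℤ, QL n = ((L n : ℝ) : ℍ[ℝ]) + ((L (n+1) : ℝ) : ℍ[ℝ]) * i
      + ((L (n+2) : ℝ) : ℍ[ℝ]) * j + ((L (n+3) : ℝ) : ℍ[ℝ]) * k)
    (ω : ℍ[ℝ]) (hω : ω = ((q : ℝ) : ℍ[ℝ]) * i + ((p : ℝ) : ℍ[ℝ]) * j - k)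
    (uα : ℍ[ℝ])
    (huα : uα = 1 + ((α : ℝ) : ℍ[ℝ]) * i + ((α^2 : ℝ) : ℍ[ℝ]) * j + ((α^3 : ℝ) : ℍ[ℝ]) * k)
    (uβ : ℍ[ℝ])
    (huβ : uβ = 1 + ((β : ℝ) : ℍ[ℝ]) * i + ((β^2 : ℝ) : ℍ[ℝ]) * j + ((β^3 : ℝ) : ℍ[ℝ]) * k) :
    uβ * uα = QL 0 - ((1 - q + q^2 - q^3 : ℝ) : ℍ[ℝ]) + ((q * Δ : ℝ) : ℍ[ℝ]) * ω := by
  have hs : α + β = p := by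
    rw [hα, hβ]; ring
  have hm : α * β = -q := by
    have hsq : Real.sqrt (p^2 + 4*q) ^ 2 = p^2 + 4*q := Real.sq_sqrt hpq.le
    rw [hα, hβ]
    nlinarith [hsq]
  have h2 := hL 0
  have h3 := hL 1
  norm_num [hL0, hL1] at h2 h3
  have hL2 : L 2 = p^2 + 2*q := by linear_combination h2
  have hL3 : L 3 = p^3 + 3*p*q := by linear_combination h3 + p * h2
  have hq : q = -(α * β) := by linarith
  obtain ⟨hi1, hi2, hi3, hi4⟩ : i.re = 0 ∧ i.imI = 1 ∧ i.imJ = 0 ∧ i.imK = 0 := by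
    subst hi; exact ⟨rfl, rfl, rfl, rfl⟩
  obtain ⟨hj1, hj2, hj3, hj4⟩ : j.re = 0 ∧ j.imI = 0 ∧ j.imJ = 1 ∧ j.imK = 0 := by
    subst hj; exact ⟨rfl, rfl, rfl, rfl⟩
  obtain ⟨hk1, hk2, hk3, hk4⟩ : k.re = 0 ∧ k.imI = 0 ∧ k.imJ = 0 ∧ k.imK = 1 := by
    subst hk; exact ⟨rfl, rfl, rfl, rfl⟩
  subst hs hq huα huβ hω hΔ
  rw [hQL 0]
  norm_num [hL0, hL1, hL2, hL3]
  ext <;>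
    simp [Quaternion.re_mul, Quaternion.imI_mul, Quaternion.imJ_mul, Quaternion.imK_mul,
      hi1, hi2, hi3, hi4, hj1, hj2, hj3, hj4, hk1, hk2, hk3, hk4,
      ← Quaternion.coe_pow, ← Quaternion.coe_mul, ← Quaternion.coe_add, ← Quaternion.coe_neg,
      Quaternion.re_coe, Quaternion.imI_coe, Quaternion.imJ_coe, Quaternion.imK_coe] <;>
    ring
end

section
/- In the real quaternions, α̲β̲ + β̲α̲ = 2(Q_L(0) − [q]), i.e. the sum of the two products of α̲ and β̲ equals 2((L(0) + L(1)i + L(2)j + L(3)k) − (1 − q + q² − q³)). -/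
open Quaternion

theorem stmt_2 (p q : ℝ) (hpq : 0 < p^2 + 4*q)
    (α β : ℝ)
    (hα : α = (p + Real.sqrt (p^2 + 4*q)) / 2)
    (hβ : β = (p - Real.sqrt (p^2 + 4*q)) / 2)
    (L : ℤ → ℝ) (hL0 : L 0 = 2) (hL1 : L 1 = p)
    (hL : ∀ n : ℤ, L (n+2) = p * L (n+1) + q * L n)
    (i j k : ℍ[ℝ])
    (hi : i = ⟨0,1,0,0⟩) (hj : j = ⟨0,0,1,0⟩) (hk : k = ⟨0,0,0,1⟩)
    (QL : ℤ → ℍ[ℝ])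
    (hQL : ∀ n : ℤ, QL n = ((L n : ℝ) : ℍ[ℝ]) + ((L (n+1) : ℝ) : ℍ[ℝ]) * i
      + ((L (n+2) : ℝ) : ℍ[ℝ]) * j + ((L (n+3) : ℝ) : ℍ[ℝ]) * k)
    (uα : ℍ[ℝ])
    (huα : uα = 1 + ((α : ℝ) : ℍ[ℝ]) * i + ((α^2 : ℝ) : ℍ[ℝ]) * j + ((α^3 : ℝ) : ℍ[ℝ]) * k)
    (uβ : ℍ[ℝ])
    (huβ : uβ = 1 + ((β : ℝ) : ℍ[ℝ]) * i + ((β^2 : ℝ) : ℍ[ℝ]) * j + ((β^3 : ℝ) : ℍ[ℝ]) * k) :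
    uα * uβ + uβ * uα = 2 * (QL 0 - ((1 - q + q^2 - q^3 : ℝ) : ℍ[ℝ])) := by
  have hsq : Real.sqrt (p^2 + 4*q) ^ 2 = p^2 + 4*q := Real.sq_sqrt hpq.le
  have hsum : α + β = p := by rw [hα, hβ]; ring
  have hprod : α * β = -q := by
    rw [hα, hβ]
    have : (p + Real.sqrt (p^2+4*q)) / 2 * ((p - Real.sqrt (p^2+4*q)) / 2)
        = (p^2 - Real.sqrt (p^2+4*q)^2) / 4 := by ring
    rw [this, hsq]; ring
  have hL2 : L 2 = p * p + q * 2 := by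
    have := hL 0; simpa [hL0, hL1] using this
  have hL3 : L 3 = p * (p * p + q * 2) + q * p := by
    have := hL 1; rw [show (1:ℤ)+2 = 3 by norm_num, show (1:ℤ)+1 = 2 by norm_num] at this
    rw [this, hL1, hL2]
  have hQL0 := hQL 0
  norm_num [hL0, hL1, hL2, hL3] at hQL0
  have hic : i.re = 0 ∧ i.imI = 1 ∧ i.imJ = 0 ∧ i.imK = 0 := by subst hi; exact ⟨rfl, rfl, rfl, rfl⟩
  have hjc : j.re = 0 ∧ j.imI = 0 ∧ j.imJ = 1 ∧ j.imK = 0 := by subst hj; exact ⟨rfl, rfl, rfl, rfl⟩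
  have hkc : k.re = 0 ∧ k.imI = 0 ∧ k.imJ = 0 ∧ k.imK = 1 := by subst hk; exact ⟨rfl, rfl, rfl, rfl⟩
  subst huα huβ
  rw [hQL0]
  have h1 : β = p - α := by linarith [hsum]
  have h2 : (2:ℍ[ℝ]) = ((2:ℝ):ℍ[ℝ]) := by norm_cast
  rw [h2]
  ext <;> simp [Quaternion.ext_iff, Quaternion.re_mul, Quaternion.imI_mul,
    Quaternion.imJ_mul, Quaternion.imK_mul, Quaternion.re_coe, Quaternion.imI_coe,
    Quaternion.imJ_coe, Quaternion.imK_coe, ← Quaternion.coe_pow, hic, hjc, hkc]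
  · linear_combination (-2 - 2*(α*β - q) - 2*(α^2*β^2 - α*β*q + q^2)) * hprod
  · linear_combination 2*hsum
  · linear_combination 2*(α+β+p)*hsum - 4*hprod
  · linear_combination (2*((α+β)^2+(α+β)*p+p^2) + 6*q)*hsum - 6*(α+β)*hprod
end

section
/- (Catalan's identity for generalized Fibonacci quaternions) For all integers m and n (with q ≠ 0): Q_w(m)² − Q_w(m+n)·Q_w(m−n) = AB·(−q)^(m−n)·((Q_L(0) − [q])·F(n)² − q·ω·F(n)·L(n)); equivalently, writing F(−n) = −(−q)^(−n)F(n), this is −AB(−q)^m F(−n)((Q_L(0) − [q])F(n) − qωL(n)). -/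
open Quaternion

private lemma rec_uniq (p q : ℝ) (hq : q ≠ 0) (G H : ℤ → ℝ)
    (hG : ∀ n : ℤ, G (n+2) = p*G (n+1) + q*G n)
    (hH : ∀ n : ℤ, H (n+2) = p*H (n+1) + q*H n)
    (h0 : G 0 = H 0) (h1 : G 1 = H 1) : ∀ n : ℤ, G n = H n := by
  have key : ∀ n : ℤ, G n = H n ∧ G (n+1) = H (n+1) := by
    intro n
    induction n using Int.induction_on with
    | zero => exact ⟨h0, h1⟩
    | succ k ih =>
        refine ⟨ih.2, ?_⟩
        have e : ((k:ℤ)+1+1) = (k:ℤ)+2 := by ring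
        rw [e, hG k, hH k, ih.1, ih.2]
    | pred k ih =>
        have e1 := hG (-(k:ℤ)-1)
        have e2 := hH (-(k:ℤ)-1)
        have a1 : (-(k:ℤ)-1+2) = -(k:ℤ)+1 := by ring
        have a2 : (-(k:ℤ)-1+1) = -(k:ℤ) := by ring
        rw [a1, a2] at e1 e2
        rw [ih.1, ih.2] at e1
        have hc : q * G (-(k:ℤ)-1) = q * H (-(k:ℤ)-1) := by linarith
        have := mul_left_cancel₀ hq hc
        exact ⟨this, by rw [a2]; exact ih.1⟩
  exact fun n => (key n).1

private lemma binet (p q : ℝ) (hq : q ≠ 0)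
    (α β : ℝ) (hsum : α + β = p) (hprod : α * β = -q) (hne : α - β ≠ 0)
    (a b : ℝ) (W : ℤ → ℝ) (hW0 : W 0 = a) (hW1 : W 1 = b)
    (hW : ∀ n : ℤ, W (n+2) = p * W (n+1) + q * W n) :
    ∀ t : ℤ, W t = ((b - a*β) * α^t - (b - a*α) * β^t)/(α-β) := by
  have hα0 : α ≠ 0 := by
    intro h; rw [h, zero_mul] at hprod; exact hq (by linarith)
  have hβ0 : β ≠ 0 := by
    intro h; rw [h, mul_zero] at hprod; exact hq (by linarith)
  have hα2 : α^2 = p*α + q := by linear_combination α*hsum - hprod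
  have hβ2 : β^2 = p*β + q := by linear_combination β*hsum - hprod
  have hαr : ∀ t : ℤ, α^(t+2) = p * α^(t+1) + q * α^t := by
    intro t
    have h1 : α ^ (t+1) = α^t * α := zpow_add_one₀ hα0 t
    have h2 : α ^ (t+2) = α^(t+1) * α := by
      rw [show t+2 = (t+1)+1 by ring]; exact zpow_add_one₀ hα0 _
    rw [h2, h1]; linear_combination (α^t) * hα2
  have hβr : ∀ t : ℤ, β^(t+2) = p * β^(t+1) + q * β^t := by
    intro t
    have h1 : β ^ (t+1) = β^t * β := zpow_add_one₀ hβ0 t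
    have h2 : β ^ (t+2) = β^(t+1) * β := by
      rw [show t+2 = (t+1)+1 by ring]; exact zpow_add_one₀ hβ0 _
    rw [h2, h1]; linear_combination (β^t) * hβ2
  refine rec_uniq p q hq W (fun t => ((b - a*β) * α^t - (b - a*α) * β^t)/(α-β)) hW ?_ ?_ ?_
  · intro t; beta_reduce; rw [hαr t, hβr t]; ring
  · simp only [zpow_zero, hW0]; field_simp; ring
  · simp only [zpow_one, hW1]; field_simp; ring

private lemma zp2 (x : ℝ) : x^(2:ℤ) = x*x := by
  rw [show (2:ℤ) = ((2:ℕ):ℤ) from rfl, zpow_natCast]; ring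

private lemma zp3 (x : ℝ) : x^(3:ℤ) = x*x*x := by
  rw [show (3:ℤ) = ((3:ℕ):ℤ) from rfl, zpow_natCast]; ring

set_option maxHeartbeats 2000000 in
theorem stmt_3 (p q : ℝ) (hpq : 0 < p^2 + 4*q)
    (hq : q ≠ 0)
    (α β : ℝ)
    (hα : α = (p + Real.sqrt (p^2 + 4*q)) / 2)
    (hβ : β = (p - Real.sqrt (p^2 + 4*q)) / 2)
    (F : ℤ → ℝ) (hF0 : F 0 = 0) (hF1 : F 1 = 1)
    (hF : ∀ n : ℤ, F (n+2) = p * F (n+1) + q * F n)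
    (L : ℤ → ℝ) (hL0 : L 0 = 2) (hL1 : L 1 = p)
    (hL : ∀ n : ℤ, L (n+2) = p * L (n+1) + q * L n)
    (a b : ℝ) (W : ℤ → ℝ) (hW0 : W 0 = a) (hW1 : W 1 = b)
    (hW : ∀ n : ℤ, W (n+2) = p * W (n+1) + q * W n)
    (A B : ℝ) (hA : A = b - a * β) (hB : B = b - a * α)
    (i j k : ℍ[ℝ])
    (hi : i = ⟨0,1,0,0⟩) (hj : j = ⟨0,0,1,0⟩) (hk : k = ⟨0,0,0,1⟩)
    (Qw : ℤ → ℍ[ℝ])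
    (hQw : ∀ n : ℤ, Qw n = ((W n : ℝ) : ℍ[ℝ]) + ((W (n+1) : ℝ) : ℍ[ℝ]) * i
      + ((W (n+2) : ℝ) : ℍ[ℝ]) * j + ((W (n+3) : ℝ) : ℍ[ℝ]) * k)
    (QL : ℤ → ℍ[ℝ])
    (hQL : ∀ n : ℤ, QL n = ((L n : ℝ) : ℍ[ℝ]) + ((L (n+1) : ℝ) : ℍ[ℝ]) * i
      + ((L (n+2) : ℝ) : ℍ[ℝ]) * j + ((L (n+3) : ℝ) : ℍ[ℝ]) * k)
    (ω : ℍ[ℝ]) (hω : ω = ((q : ℝ) : ℍ[ℝ]) * i + ((p : ℝ) : ℍ[ℝ]) * j - k)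
    (m n : ℤ) :
    Qw m ^ 2 - Qw (m+n) * Qw (m-n) =
      ((A * B * (-q)^(m-n) : ℝ) : ℍ[ℝ]) *
        ((QL 0 - ((1 - q + q^2 - q^3 : ℝ) : ℍ[ℝ])) * ((F n ^ 2 : ℝ) : ℍ[ℝ])
          - ((q : ℝ) : ℍ[ℝ]) * ω * ((F n * L n : ℝ) : ℍ[ℝ])) := by
  have hs2 : (Real.sqrt (p^2+4*q))^2 = p^2+4*q := Real.sq_sqrt hpq.le
  have hspos : 0 < Real.sqrt (p^2+4*q) := Real.sqrt_pos.mpr hpq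
  have hsum : α + β = p := by rw [hα, hβ]; ring
  have hprod : α * β = -q := by rw [hα, hβ]; nlinarith [hs2]
  have hne : α - β ≠ 0 := by
    rw [hα, hβ]; intro h; nlinarith [hspos]
  have hα0 : α ≠ 0 := by
    intro h; rw [h, zero_mul] at hprod; exact hq (by linarith)
  have hβ0 : β ≠ 0 := by
    intro h; rw [h, mul_zero] at hprod; exact hq (by linarith)
  have hWn : ∀ t : ℤ, W t = (A * α^t - B * β^t)/(α-β) := by
    intro t; rw [hA, hB]; exact binet p q hq α β hsum hprod hne a b W hW0 hW1 hW t
  have hFn : ∀ t : ℤ, F t = (α^t - β^t)/(α-β) := by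
    intro t
    rw [binet p q hq α β hsum hprod hne 0 1 F hF0 hF1 hF t]; ring
  have hLn : ∀ t : ℤ, L t = α^t + β^t := by
    intro t
    rw [binet p q hq α β hsum hprod hne 2 p L hL0 hL1 hL t]
    field_simp
    linear_combination (β^t - α^t) * hsum
  have hαn : α^n ≠ 0 := zpow_ne_zero n hα0
  have hβn : β^n ≠ 0 := zpow_ne_zero n hβ0
  have hp' : p = α + β := hsum.symm
  have hq' : q = -(α*β) := by linarith
  rw [hQw m, hQw (m+n), hQw (m-n), hQL 0, hω, sq]
  simp only [zero_add]
  ext <;>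
  · simp only [Quaternion.re_add, Quaternion.imI_add, Quaternion.imJ_add, Quaternion.imK_add,
      Quaternion.re_sub, Quaternion.imI_sub, Quaternion.imJ_sub, Quaternion.imK_sub,
      Quaternion.re_mul, Quaternion.imI_mul, Quaternion.imJ_mul, Quaternion.imK_mul,
      Quaternion.re_coe, Quaternion.imI_coe, Quaternion.imJ_coe, Quaternion.imK_coe]
    simp only [hWn, hFn, hLn, hi, hj, hk]
    rw [← hprod]
    simp only [mul_zpow, zpow_add₀ hα0, zpow_sub₀ hα0, zpow_add₀ hβ0, zpow_sub₀ hβ0,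
      zpow_one, zpow_zero, zp2, zp3]
    rw [hp', hq']
    field_simp
    ring
end

section
/- (Cassini's identity for generalized Fibonacci quaternions) For every integer m (with q ≠ 0): Q_w(m)² − Q_w(m+1)·Q_w(m−1) = AB·(−q)^(m−1)·(Q_L(0) − [q] − pq·ω). -/
open Quaternion

theorem stmt_4 (p q : ℝ) (hpq : 0 < p^2 + 4*q)
    (hq : q ≠ 0)
    (α β : ℝ)
    (hα : α = (p + Real.sqrt (p^2 + 4*q)) / 2)
    (hβ : β = (p - Real.sqrt (p^2 + 4*q)) / 2)
    (L : ℤ → ℝ) (hL0 : L 0 = 2) (hL1 : L 1 = p)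
    (hL : ∀ n : ℤ, L (n+2) = p * L (n+1) + q * L n)
    (a b : ℝ) (W : ℤ → ℝ) (hW0 : W 0 = a) (hW1 : W 1 = b)
    (hW : ∀ n : ℤ, W (n+2) = p * W (n+1) + q * W n)
    (A B : ℝ) (hA : A = b - a * β) (hB : B = b - a * α)
    (i j k : ℍ[ℝ])
    (hi : i = ⟨0,1,0,0⟩) (hj : j = ⟨0,0,1,0⟩) (hk : k = ⟨0,0,0,1⟩)
    (Qw : ℤ → ℍ[ℝ])
    (hQw : ∀ n : ℤ, Qw n = ((W n : ℝ) : ℍ[ℝ]) + ((W (n+1) : ℝ) : ℍ[ℝ]) * i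
      + ((W (n+2) : ℝ) : ℍ[ℝ]) * j + ((W (n+3) : ℝ) : ℍ[ℝ]) * k)
    (QL : ℤ → ℍ[ℝ])
    (hQL : ∀ n : ℤ, QL n = ((L n : ℝ) : ℍ[ℝ]) + ((L (n+1) : ℝ) : ℍ[ℝ]) * i
      + ((L (n+2) : ℝ) : ℍ[ℝ]) * j + ((L (n+3) : ℝ) : ℍ[ℝ]) * k)
    (ω : ℍ[ℝ]) (hω : ω = ((q : ℝ) : ℍ[ℝ]) * i + ((p : ℝ) : ℍ[ℝ]) * j - k)
    (m : ℤ) :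
    Qw m ^ 2 - Qw (m+1) * Qw (m-1) =
      ((A * B * (-q)^(m-1) : ℝ) : ℍ[ℝ]) * (QL 0 - ((1 - q + q^2 - q^3 : ℝ) : ℍ[ℝ]) - ((p * q : ℝ) : ℍ[ℝ]) * ω) := by
  have hqn : (-q : ℝ) ≠ 0 := neg_ne_zero.2 hq
  have hs : Real.sqrt (p^2+4*q) ^ 2 = p^2+4*q := Real.sq_sqrt hpq.le
  have hsum : α + β = p := by rw [hα, hβ]; ring
  have hprod : α * β = -q := by rw [hα, hβ]; linear_combination (-(1/4)) * hs
  have hAB : A * B = b^2 - p*(a*b) - q*a^2 := by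
    rw [hA, hB]; linear_combination (-(a*b)) * hsum + a^2 * hprod
  -- Qw satisfies the same recurrence
  have hrec : ∀ n : ℤ, Qw (n+2) = ((p:ℝ):ℍ[ℝ]) * Qw (n+1) + ((q:ℝ):ℍ[ℝ]) * Qw n := by
    intro n
    have h2 := hW n
    have h3 : W (n+3) = p * W (n+2) + q * W (n+1) := by
      have := hW (n+1)
      rw [show n+1+2 = n+3 by ring, show n+1+1 = n+2 by ring] at this; exact this
    have h4 : W (n+4) = p * W (n+3) + q * W (n+2) := by
      have := hW (n+2)
      rw [show n+2+2 = n+4 by ring, show n+2+1 = n+3 by ring] at this; exact this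
    have h5 : W (n+5) = p * W (n+4) + q * W (n+3) := by
      have := hW (n+3)
      rw [show n+3+2 = n+5 by ring, show n+3+1 = n+4 by ring] at this; exact this
    rw [hQw (n+2), hQw (n+1), hQw n,
      show n+2+1 = n+3 by ring, show n+2+2 = n+4 by ring, show n+2+3 = n+5 by ring,
      show n+1+1 = n+2 by ring, show n+1+2 = n+3 by ring, show n+1+3 = n+4 by ring,
      h5, h4, h3, h2]
    ext <;>
      simp only [pow_two, Quaternion.re_add, Quaternion.imI_add, Quaternion.imJ_add,
        Quaternion.imK_add, Quaternion.re_sub, Quaternion.imI_sub, Quaternion.imJ_sub,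
        Quaternion.imK_sub, Quaternion.re_neg, Quaternion.imI_neg, Quaternion.imJ_neg,
        Quaternion.imK_neg, Quaternion.re_mul, Quaternion.imI_mul, Quaternion.imJ_mul,
        Quaternion.imK_mul, Quaternion.re_coe, Quaternion.imI_coe, Quaternion.imJ_coe,
        Quaternion.imK_coe, QuaternionAlgebra.re_mul, QuaternionAlgebra.imI_mul,
        QuaternionAlgebra.imJ_mul, QuaternionAlgebra.imK_mul, QuaternionAlgebra.re_coe,
        QuaternionAlgebra.imI_coe, QuaternionAlgebra.imJ_coe, QuaternionAlgebra.imK_coe] <;>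
      ring
  set E : ℤ → ℍ[ℝ] := fun n => Qw n ^ 2 - Qw (n+1) * Qw (n-1) with hE
  have key : ∀ n : ℤ, E (n+1) = ((-q : ℝ) : ℍ[ℝ]) * E n := by
    intro n
    have h1 : Qw (n+1) = ((p:ℝ):ℍ[ℝ]) * Qw n + ((q:ℝ):ℍ[ℝ]) * Qw (n-1) := by
      have := hrec (n-1)
      rw [show n-1+2 = n+1 by ring, show n-1+1 = n by ring] at this; exact this
    have h2 := hrec n
    show Qw (n+1) ^ 2 - Qw (n+1+1) * Qw (n+1-1) =
        ((-q : ℝ) : ℍ[ℝ]) * (Qw n ^ 2 - Qw (n+1) * Qw (n-1))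
    rw [show n+1+1 = n+2 by ring, show n+1-1 = n by ring, h2, h1]
    ext <;>
      simp only [pow_two, Quaternion.re_add, Quaternion.imI_add, Quaternion.imJ_add,
        Quaternion.imK_add, Quaternion.re_sub, Quaternion.imI_sub, Quaternion.imJ_sub,
        Quaternion.imK_sub, Quaternion.re_neg, Quaternion.imI_neg, Quaternion.imJ_neg,
        Quaternion.imK_neg, Quaternion.re_mul, Quaternion.imI_mul, Quaternion.imJ_mul,
        Quaternion.imK_mul, Quaternion.re_coe, Quaternion.imI_coe, Quaternion.imJ_coe,
        Quaternion.imK_coe, QuaternionAlgebra.re_mul, QuaternionAlgebra.imI_mul,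
        QuaternionAlgebra.imJ_mul, QuaternionAlgebra.imK_mul, QuaternionAlgebra.re_coe,
        QuaternionAlgebra.imI_coe, QuaternionAlgebra.imJ_coe, QuaternionAlgebra.imK_coe] <;>
      ring
  have keyinv : ∀ n : ℤ, E n = (((-q)⁻¹ : ℝ) : ℍ[ℝ]) * E (n+1) := by
    intro n
    rw [key n, ← mul_assoc, ← Quaternion.coe_mul, inv_mul_cancel₀ hqn, Quaternion.coe_one,
      one_mul]
  have main : ∀ n : ℤ, E n = (((-q)^(n-1) : ℝ) : ℍ[ℝ]) * E 1 := by
    intro n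
    induction n using Int.induction_on with
    | zero =>
      have := keyinv 0
      rw [show ((0:ℤ)+1) = 1 by norm_num] at this
      rw [this, show ((0:ℤ)-1) = -1 by norm_num, zpow_neg_one]
    | succ n ih =>
      have hr : ((-q)^((n:ℤ)+1-1) : ℝ) = (-q) * (-q)^((n:ℤ)-1) := by
        rw [show (n:ℤ)+1-1 = 1 + ((n:ℤ)-1) by ring, zpow_one_add₀ hqn]
      rw [key (n:ℤ), ih, ← mul_assoc, ← Quaternion.coe_mul, ← hr]
    | pred n ih =>
      have := keyinv (-(n:ℤ)-1)
      rw [show (-(n:ℤ)-1+1) = -(n:ℤ) by ring] at this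
      have hr : ((-q)^(-(n:ℤ)-1-1) : ℝ) = (-q)⁻¹ * (-q)^(-(n:ℤ)-1) := by
        rw [show -(n:ℤ)-1-1 = (-1) + (-(n:ℤ)-1) by ring, zpow_add₀ hqn, zpow_neg_one]
      rw [this, ih, ← mul_assoc, ← Quaternion.coe_mul, ← hr]
  -- base case
  have w2 : W 2 = p*b + q*a := by
    have := hW 0
    rw [show (0:ℤ)+2 = 2 by norm_num, show (0:ℤ)+1 = 1 by norm_num, hW0, hW1] at this
    exact this
  have w3 : W 3 = p*(p*b+q*a) + q*b := by
    have := hW 1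
    rw [show (1:ℤ)+2 = 3 by norm_num, show (1:ℤ)+1 = 2 by norm_num, w2, hW1] at this
    exact this
  have w4 : W 4 = p*(p*(p*b+q*a)+q*b) + q*(p*b+q*a) := by
    have := hW 2
    rw [show (2:ℤ)+2 = 4 by norm_num, show (2:ℤ)+1 = 3 by norm_num, w3, w2] at this
    exact this
  have w5 : W 5 = p*(p*(p*(p*b+q*a)+q*b) + q*(p*b+q*a)) + q*(p*(p*b+q*a)+q*b) := by
    have := hW 3
    rw [show (3:ℤ)+2 = 5 by norm_num, show (3:ℤ)+1 = 4 by norm_num, w4, w3] at this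
    exact this
  have l2 : L 2 = p*p + 2*q := by
    have := hL 0
    rw [show (0:ℤ)+2 = 2 by norm_num, show (0:ℤ)+1 = 1 by norm_num, hL0, hL1] at this
    rw [this]; ring
  have l3 : L 3 = p*(p*p+2*q) + q*p := by
    have := hL 1
    rw [show (1:ℤ)+2 = 3 by norm_num, show (1:ℤ)+1 = 2 by norm_num, l2, hL1] at this
    exact this
  have base : E 1 = ((A*B : ℝ) : ℍ[ℝ]) *
      (QL 0 - ((1 - q + q^2 - q^3 : ℝ) : ℍ[ℝ]) - ((p * q : ℝ) : ℍ[ℝ]) * ω) := by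
    show Qw 1 ^ 2 - Qw (1+1) * Qw (1-1) = _
    rw [show (1:ℤ)+1 = 2 by norm_num, show (1:ℤ)-1 = 0 by norm_num,
      hQw 0, hQw 1, hQw 2, hQL 0,
      show (0:ℤ)+1 = 1 by norm_num, show (0:ℤ)+2 = 2 by norm_num,
      show (0:ℤ)+3 = 3 by norm_num, show (1:ℤ)+1 = 2 by norm_num,
      show (1:ℤ)+2 = 3 by norm_num, show (1:ℤ)+3 = 4 by norm_num,
      show (2:ℤ)+1 = 3 by norm_num, show (2:ℤ)+2 = 4 by norm_num,
      show (2:ℤ)+3 = 5 by norm_num,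
      w5, w4, w3, w2, hW0, hW1, l3, l2, hL0, hL1, hω, hAB]
    have ci : i.re = 0 ∧ i.imI = 1 ∧ i.imJ = 0 ∧ i.imK = 0 := by rw [hi]; exact ⟨rfl, rfl, rfl, rfl⟩
    have cj : j.re = 0 ∧ j.imI = 0 ∧ j.imJ = 1 ∧ j.imK = 0 := by rw [hj]; exact ⟨rfl, rfl, rfl, rfl⟩
    have ck : k.re = 0 ∧ k.imI = 0 ∧ k.imJ = 0 ∧ k.imK = 1 := by rw [hk]; exact ⟨rfl, rfl, rfl, rfl⟩
    ext <;>
      simp only [pow_two, Quaternion.re_add, Quaternion.imI_add, Quaternion.imJ_add,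
        Quaternion.imK_add, Quaternion.re_sub, Quaternion.imI_sub, Quaternion.imJ_sub,
        Quaternion.imK_sub, Quaternion.re_neg, Quaternion.imI_neg, Quaternion.imJ_neg,
        Quaternion.imK_neg, Quaternion.re_mul, Quaternion.imI_mul, Quaternion.imJ_mul,
        Quaternion.imK_mul, Quaternion.re_coe, Quaternion.imI_coe, Quaternion.imJ_coe,
        Quaternion.imK_coe, QuaternionAlgebra.re_mul, QuaternionAlgebra.imI_mul,
        QuaternionAlgebra.imJ_mul, QuaternionAlgebra.imK_mul, QuaternionAlgebra.re_coe,
        QuaternionAlgebra.imI_coe, QuaternionAlgebra.imJ_coe, QuaternionAlgebra.imK_coe, ci.1, ci.2.1, ci.2.2.1, ci.2.2.2,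
        cj.1, cj.2.1, cj.2.2.1, cj.2.2.2, ck.1, ck.2.1, ck.2.2.1, ck.2.2.2] <;>
      ring
  have := main m
  have hfold : Qw m ^ 2 - Qw (m+1) * Qw (m-1) = E m := rfl
  rw [hfold, this, base, ← mul_assoc, ← Quaternion.coe_mul, mul_comm ((-q)^(m-1)) (A*B)]
end

section
/- (d'Ocagne's identity for generalized Fibonacci quaternions) For all integers n and m (with q ≠ 0): Q_w(n)·Q_w(m+1) − Q_w(n+1)·Q_w(m) = (−q)^m·AB·((Q_L(0) − [q])·F(n−m) − q·ω·L(n−m)). -/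
open Quaternion
set_option maxHeartbeats 4000000
set_option maxRecDepth 100000

lemma rec_unique (p q : ℝ) (hq : q ≠ 0) (f g : ℤ → ℝ)
    (hf : ∀ n : ℤ, f (n+2) = p * f (n+1) + q * f n)
    (hg : ∀ n : ℤ, g (n+2) = p * g (n+1) + q * g n)
    (h0 : f 0 = g 0) (h1 : f 1 = g 1) : ∀ n : ℤ, f n = g n := by
  have key : ∀ n : ℤ, f n = g n ∧ f (n+1) = g (n+1) := by
    intro n
    induction n using Int.induction_on with
    | zero => exact ⟨h0, h1⟩
    | succ k ih =>
      refine ⟨ih.2, ?_⟩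
      have hfk := hf k; have hgk := hg k
      have : ((k:ℤ)+1)+1 = k+2 := by ring
      rw [this, hfk, hgk, ih.1, ih.2]
    | pred k ih =>
      have e1 : (-(k:ℤ)-1)+1 = -k := by ring
      refine ⟨?_, by rw [e1]; exact ih.1⟩
      have hfk := hf (-(k:ℤ)-1); have hgk := hg (-(k:ℤ)-1)
      have e2 : (-(k:ℤ)-1)+2 = -k+1 := by ring
      rw [e2, e1] at hfk hgk
      rw [ih.1, ih.2] at hfk
      exact mul_left_cancel₀ hq (by linarith)
  exact fun n => (key n).1

theorem stmt_5 (p q : ℝ) (hpq : 0 < p^2 + 4*q)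
    (hq : q ≠ 0)
    (α β : ℝ)
    (hα : α = (p + Real.sqrt (p^2 + 4*q)) / 2)
    (hβ : β = (p - Real.sqrt (p^2 + 4*q)) / 2)
    (F : ℤ → ℝ) (hF0 : F 0 = 0) (hF1 : F 1 = 1)
    (hF : ∀ n : ℤ, F (n+2) = p * F (n+1) + q * F n)
    (L : ℤ → ℝ) (hL0 : L 0 = 2) (hL1 : L 1 = p)
    (hL : ∀ n : ℤ, L (n+2) = p * L (n+1) + q * L n)
    (a b : ℝ) (W : ℤ → ℝ) (hW0 : W 0 = a) (hW1 : W 1 = b)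
    (hW : ∀ n : ℤ, W (n+2) = p * W (n+1) + q * W n)
    (A B : ℝ) (hA : A = b - a * β) (hB : B = b - a * α)
    (i j k : ℍ[ℝ])
    (hi : i = ⟨0,1,0,0⟩) (hj : j = ⟨0,0,1,0⟩) (hk : k = ⟨0,0,0,1⟩)
    (Qw : ℤ → ℍ[ℝ])
    (hQw : ∀ n : ℤ, Qw n = ((W n : ℝ) : ℍ[ℝ]) + ((W (n+1) : ℝ) : ℍ[ℝ]) * i
      + ((W (n+2) : ℝ) : ℍ[ℝ]) * j + ((W (n+3) : ℝ) : ℍ[ℝ]) * k)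
    (QL : ℤ → ℍ[ℝ])
    (hQL : ∀ n : ℤ, QL n = ((L n : ℝ) : ℍ[ℝ]) + ((L (n+1) : ℝ) : ℍ[ℝ]) * i
      + ((L (n+2) : ℝ) : ℍ[ℝ]) * j + ((L (n+3) : ℝ) : ℍ[ℝ]) * k)
    (ω : ℍ[ℝ]) (hω : ω = ((q : ℝ) : ℍ[ℝ]) * i + ((p : ℝ) : ℍ[ℝ]) * j - k)
    (n m : ℤ) :
    Qw n * Qw (m+1) - Qw (n+1) * Qw m =
      (((-q)^m * (A * B) : ℝ) : ℍ[ℝ]) *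
        ((QL 0 - ((1 - q + q^2 - q^3 : ℝ) : ℍ[ℝ])) * ((F (n-m) : ℝ) : ℍ[ℝ])
          - ((q : ℝ) : ℍ[ℝ]) * ω * ((L (n-m) : ℝ) : ℍ[ℝ])) := by
  set s := Real.sqrt (p^2 + 4*q) with hs
  have hs2 : s^2 = p^2 + 4*q := Real.sq_sqrt hpq.le
  have hs0 : s ≠ 0 := by
    have := Real.sqrt_pos.mpr hpq
    exact ne_of_gt this
  have hdiff : α - β = s := by rw [hα, hβ]; ring
  have hsum : α + β = p := by rw [hα, hβ]; ring
  have hprod : α * β = -q := by rw [hα, hβ]; field_simp; linear_combination -hs2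
  have hα0 : α ≠ 0 := by
    intro h; apply hq; have := hprod; rw [h] at this; simpa using this.symm
  have hβ0 : β ≠ 0 := by
    intro h; apply hq; have := hprod; rw [h] at this; simpa using this.symm
  have hα2 : α^(2:ℤ) = p * α + q := by
    rw [show (2:ℤ) = ((2:ℕ):ℤ) from rfl, zpow_natCast, hα]
    field_simp
    linear_combination hs2
  have hβ2 : β^(2:ℤ) = p * β + q := by
    rw [show (2:ℤ) = ((2:ℕ):ℤ) from rfl, zpow_natCast, hβ]
    field_simp
    linear_combination hs2
  have hrecα : ∀ N : ℤ, α^(N+2) = p * α^(N+1) + q * α^N := by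
    intro N
    rw [zpow_add₀ hα0 N 2, zpow_add₀ hα0 N 1, zpow_one, hα2]; ring
  have hrecβ : ∀ N : ℤ, β^(N+2) = p * β^(N+1) + q * β^N := by
    intro N
    rw [zpow_add₀ hβ0 N 2, zpow_add₀ hβ0 N 1, zpow_one, hβ2]; ring
  -- Binet formulas
  have hWb : ∀ N : ℤ, W N = ((b - a*β) * α^N - (b - a*α) * β^N) / s := by
    apply rec_unique p q hq W _ hW (fun N => by simp only [hrecα, hrecβ]; ring)
    · simp only [zpow_zero]
      rw [hW0]; field_simp; linear_combination (-a) * hdiff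
    · simp only [zpow_one]
      rw [hW1]; field_simp; linear_combination (-b) * hdiff
  have hFb : ∀ N : ℤ, F N = (α^N - β^N) / s := by
    apply rec_unique p q hq F _ hF (fun N => by simp only [hrecα, hrecβ]; ring)
    · simp only [zpow_zero]; rw [hF0]; simp
    · simp only [zpow_one]; rw [hF1]; field_simp; linear_combination -hdiff
  have hLb : ∀ N : ℤ, L N = α^N + β^N := by
    apply rec_unique p q hq L _ hL (fun N => by simp only [hrecα, hrecβ]; ring)
    · simp only [zpow_zero]; rw [hL0]; norm_num
    · simp only [zpow_one]; rw [hL1]; linarith [hsum]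
  have hαm : α^m ≠ 0 := zpow_ne_zero _ hα0
  have hβm : β^m ≠ 0 := zpow_ne_zero _ hβ0
  have hp' : p = α + β := hsum.symm
  have hq' : q = -(α * β) := by linarith [hprod]
  have hαβne : α - β ≠ 0 := by rw [hdiff]; exact hs0
  have hm : ((-q)^m : ℝ) = α^m * β^m := by
    rw [show -q = α * β by linarith [hprod], mul_zpow]
  have hic : i.re = 0 ∧ i.imI = 1 ∧ i.imJ = 0 ∧ i.imK = 0 := by subst hi; exact ⟨rfl, rfl, rfl, rfl⟩
  have hjc : j.re = 0 ∧ j.imI = 0 ∧ j.imJ = 1 ∧ j.imK = 0 := by subst hj; exact ⟨rfl, rfl, rfl, rfl⟩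
  have hkc : k.re = 0 ∧ k.imI = 0 ∧ k.imJ = 0 ∧ k.imK = 1 := by subst hk; exact ⟨rfl, rfl, rfl, rfl⟩
  simp only [hQw, hQL, hω, hm]
  ext <;>
  · simp only [Quaternion.re_mul, Quaternion.imI_mul, Quaternion.imJ_mul, Quaternion.imK_mul,
      Quaternion.re_add, Quaternion.imI_add, Quaternion.imJ_add, Quaternion.imK_add,
      Quaternion.re_sub, Quaternion.imI_sub, Quaternion.imJ_sub, Quaternion.imK_sub,
      Quaternion.re_coe, Quaternion.imI_coe, Quaternion.imJ_coe, Quaternion.imK_coe,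
      hic.1, hic.2.1, hic.2.2.1, hic.2.2.2, hjc.1, hjc.2.1, hjc.2.2.1, hjc.2.2.2,
      hkc.1, hkc.2.1, hkc.2.2.1, hkc.2.2.2,
      mul_zero, mul_one, zero_mul, one_mul, add_zero, zero_add, sub_zero, zero_sub, neg_neg, neg_zero]
    simp only [hWb, hFb, hLb, hA, hB]
    simp only [hp', hq']
    simp only [zpow_add₀ hα0, zpow_add₀ hβ0, zpow_sub₀ hα0, zpow_sub₀ hβ0,
      zpow_one, zpow_zero, zpow_ofNat]
    rw [← hdiff]
    field_simp
    ring
end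

section
/- For every integer n (with q ≠ 0), the commutator of consecutive generalized Fibonacci quaternions satisfies Q_w(n)·Q_w(n+1) − Q_w(n+1)·Q_w(n) = 2·(−q)^(n+1)·AB·ω. -/
open Quaternion

theorem stmt_6 (p q : ℝ) (hpq : 0 < p^2 + 4*q)
    (hq : q ≠ 0)
    (α β : ℝ)
    (hα : α = (p + Real.sqrt (p^2 + 4*q)) / 2)
    (hβ : β = (p - Real.sqrt (p^2 + 4*q)) / 2)
    (a b : ℝ) (W : ℤ → ℝ) (hW0 : W 0 = a) (hW1 : W 1 = b)
    (hW : ∀ n : ℤ, W (n+2) = p * W (n+1) + q * W n)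
    (A B : ℝ) (hA : A = b - a * β) (hB : B = b - a * α)
    (i j k : ℍ[ℝ])
    (hi : i = ⟨0,1,0,0⟩) (hj : j = ⟨0,0,1,0⟩) (hk : k = ⟨0,0,0,1⟩)
    (Qw : ℤ → ℍ[ℝ])
    (hQw : ∀ n : ℤ, Qw n = ((W n : ℝ) : ℍ[ℝ]) + ((W (n+1) : ℝ) : ℍ[ℝ]) * i
      + ((W (n+2) : ℝ) : ℍ[ℝ]) * j + ((W (n+3) : ℝ) : ℍ[ℝ]) * k)
    (ω : ℍ[ℝ]) (hω : ω = ((q : ℝ) : ℍ[ℝ]) * i + ((p : ℝ) : ℍ[ℝ]) * j - k)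
    (n : ℤ) :
    Qw n * Qw (n+1) - Qw (n+1) * Qw n = ((2 * (-q)^(n+1) * (A * B) : ℝ) : ℍ[ℝ]) * ω := by
  have hq' : (-q) ≠ 0 := neg_ne_zero.2 hq
  have hs : Real.sqrt (p^2+4*q) ^ 2 = p^2 + 4*q := Real.sq_sqrt hpq.le
  have hAB : A * B = b^2 - p*a*b - q*a^2 := by
    rw [hA, hB, hα, hβ]
    linear_combination (-(a^2)/4) * hs
  -- step lemmas
  have step : ∀ m : ℤ, W (m+1) * W (m+3) - W (m+2)^2
      = -q * (W m * W (m+2) - W (m+1)^2) := by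
    intro m
    have r2 : W (m+3) = p * W (m+2) + q * W (m+1) := by
      have := hW (m+1)
      simpa [show m+1+2 = m+3 from by ring, show m+1+1 = m+2 from by ring] using this
    have r1 := hW m
    rw [r2, r1]; ring
  have stepd : ∀ m : ℤ, W (m+1) * W (m+4) - W (m+2) * W (m+3)
      = -q * (W m * W (m+3) - W (m+1) * W (m+2)) := by
    intro m
    have r4 : W (m+4) = p * W (m+3) + q * W (m+2) := by
      have := hW (m+2)
      simpa [show m+2+2 = m+4 from by ring, show m+2+1 = m+3 from by ring] using this
    have r1 := hW m
    rw [r4, r1]; ring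
  have claim : ∀ m : ℤ,
      W m * W (m+2) - W (m+1)^2 = (-q)^m * (-(A*B)) ∧
      W m * W (m+3) - W (m+1) * W (m+2) = (-q)^m * (-(p*(A*B))) := by
    intro m
    induction m using Int.induction_on with
    | zero =>
      have h2 : W 2 = p * b + q * a := by
        have := hW 0
        norm_num [hW0, hW1] at this
        exact this
      have h3 : W 3 = p * W 2 + q * b := by
        have := hW 1
        norm_num [hW1] at this
        exact this
      norm_num [hW0, hW1, h2, h3]
      constructor
      · linear_combination hAB
      · linear_combination p * hAB
    | succ k ih =>
      have i1 : (k:ℤ)+1+1 = k+2 := by ring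
      have i2 : (k:ℤ)+1+2 = k+3 := by ring
      have i3 : (k:ℤ)+1+3 = k+4 := by ring
      have hz := zpow_add_one₀ hq' (k:ℤ)
      constructor
      · rw [i1, i2, step k, ih.1, hz]; ring
      · rw [i1, i2, i3, stepd k, ih.2, hz]; ring
    | pred k ih =>
      have i1 : -(k:ℤ)-1+1 = -k := by ring
      have i2 : -(k:ℤ)-1+2 = -k+1 := by ring
      have i3 : -(k:ℤ)-1+3 = -k+2 := by ring
      have i4 : -(k:ℤ)-1+4 = -k+3 := by ring
      have hstep := step (-(k:ℤ)-1)
      have hstepd := stepd (-(k:ℤ)-1)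
      rw [i1, i2, i3] at hstep
      rw [i1, i2, i3, i4] at hstepd
      have hz : (-q)^(-(k:ℤ)) = (-q)^(-(k:ℤ)-1) * (-q) := by
        rw [← zpow_add_one₀ hq', i1]
      rw [i1, i2, i3]
      constructor
      · apply mul_right_cancel₀ hq'
        linear_combination -hstep + ih.1 + (-(A*B)) * hz
      · apply mul_right_cancel₀ hq'
        linear_combination -hstepd + ih.2 + (-(p*(A*B))) * hz
  have j1 : n+1+1 = n+2 := by ring
  have j2 : n+1+2 = n+3 := by ring
  have j3 : n+1+3 = n+4 := by ring
  have c1 := (claim (n+1)).1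
  have c2 := (claim (n+2)).1
  have c3 := (claim (n+1)).2
  rw [j1, j2] at c1
  rw [show n+2+1 = n+3 from by ring, show n+2+2 = n+4 from by ring] at c2
  rw [j1, j2, j3] at c3
  have hz1 : (-q)^(n+2) = (-q)^(n+1) * (-q) := by
    rw [← zpow_add_one₀ hq']; ring_nf
  rw [hz1] at c2
  set c : ℝ := 2 * (-q)^(n+1) * (A*B) with hc
  obtain ⟨hi0, hi1, hi2, hi3⟩ : i.re = 0 ∧ i.imI = 1 ∧ i.imJ = 0 ∧ i.imK = 0 := by subst hi; exact ⟨rfl, rfl, rfl, rfl⟩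
  obtain ⟨hj0, hj1, hj2, hj3⟩ : j.re = 0 ∧ j.imI = 0 ∧ j.imJ = 1 ∧ j.imK = 0 := by subst hj; exact ⟨rfl, rfl, rfl, rfl⟩
  obtain ⟨hk0, hk1, hk2, hk3⟩ : k.re = 0 ∧ k.imI = 0 ∧ k.imJ = 0 ∧ k.imK = 1 := by subst hk; exact ⟨rfl, rfl, rfl, rfl⟩
  rw [hQw n, hQw (n+1), hω, j1, j2, j3]
  ext
  · simp [Quaternion.re_mul, Quaternion.imI_mul, Quaternion.imJ_mul, Quaternion.imK_mul, hi0, hi1, hi2, hi3, hj0, hj1, hj2, hj3, hk0, hk1, hk2, hk3]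
    ring
  · simp [Quaternion.re_mul, Quaternion.imI_mul, Quaternion.imJ_mul, Quaternion.imK_mul, hi0, hi1, hi2, hi3, hj0, hj1, hj2, hj3, hk0, hk1, hk2, hk3]
    linear_combination 2*c2 - q*hc
  · simp [Quaternion.re_mul, Quaternion.imI_mul, Quaternion.imJ_mul, Quaternion.imK_mul, hi0, hi1, hi2, hi3, hj0, hj1, hj2, hj3, hk0, hk1, hk2, hk3]
    linear_combination -2*c3 - p*hc
  · simp [Quaternion.re_mul, Quaternion.imI_mul, Quaternion.imJ_mul, Quaternion.imK_mul, hi0, hi1, hi2, hi3, hj0, hj1, hj2, hj3, hk0, hk1, hk2, hk3]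
    linear_combination 2*c1 + hc
end

section
/- For all integers n, r and s (with q ≠ 0): Q_L(n+r)·Q_F(n+s) − Q_L(n+s)·Q_F(n+r) = 2·(−q)^(n+r)·F(s−r)·(Q_L(0) − [q]). -/
open Quaternion

set_option maxHeartbeats 1600000 in
theorem stmt_7 (p q : ℝ) (hpq : 0 < p^2 + 4*q)
    (hq : q ≠ 0)
    (α β : ℝ)
    (hα : α = (p + Real.sqrt (p^2 + 4*q)) / 2)
    (hβ : β = (p - Real.sqrt (p^2 + 4*q)) / 2)
    (F : ℤ → ℝ) (hF0 : F 0 = 0) (hF1 : F 1 = 1)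
    (hF : ∀ n : ℤ, F (n+2) = p * F (n+1) + q * F n)
    (L : ℤ → ℝ) (hL0 : L 0 = 2) (hL1 : L 1 = p)
    (hL : ∀ n : ℤ, L (n+2) = p * L (n+1) + q * L n)
    (i j k : ℍ[ℝ])
    (hi : i = ⟨0,1,0,0⟩) (hj : j = ⟨0,0,1,0⟩) (hk : k = ⟨0,0,0,1⟩)
    (QF : ℤ → ℍ[ℝ])
    (hQF : ∀ n : ℤ, QF n = ((F n : ℝ) : ℍ[ℝ]) + ((F (n+1) : ℝ) : ℍ[ℝ]) * i
      + ((F (n+2) : ℝ) : ℍ[ℝ]) * j + ((F (n+3) : ℝ) : ℍ[ℝ]) * k)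
    (QL : ℤ → ℍ[ℝ])
    (hQL : ∀ n : ℤ, QL n = ((L n : ℝ) : ℍ[ℝ]) + ((L (n+1) : ℝ) : ℍ[ℝ]) * i
      + ((L (n+2) : ℝ) : ℍ[ℝ]) * j + ((L (n+3) : ℝ) : ℍ[ℝ]) * k)
    (n r s : ℤ) :
    QL (n+r) * QF (n+s) - QL (n+s) * QF (n+r) =
      ((2 * (-q)^(n+r) * F (s-r) : ℝ) : ℍ[ℝ]) * (QL 0 - ((1 - q + q^2 - q^3 : ℝ) : ℍ[ℝ])) := by
  have hsq : Real.sqrt (p^2+4*q) ^ 2 = p^2+4*q := Real.sq_sqrt hpq.le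
  have hmul : α * β = -q := by rw [hα, hβ]; linear_combination (-1/4 : ℝ) * hsq
  have hadd : α + β = p := by rw [hα, hβ]; ring
  have hα2 : α^2 = p*α + q := by rw [hα]; linear_combination (1/4 : ℝ) * hsq
  have hβ2 : β^2 = p*β + q := by rw [hβ]; linear_combination (1/4 : ℝ) * hsq
  have hα0 : α ≠ 0 := by
    intro h; apply hq; have := hmul; rw [h] at this; simpa using this.symm
  have hβ0 : β ≠ 0 := by
    intro h; apply hq; have := hmul; rw [h] at this; simpa using this.symm
  have hd : α - β ≠ 0 := by
    rw [hα, hβ]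
    have : 0 < Real.sqrt (p^2+4*q) := Real.sqrt_pos.mpr hpq
    intro h; rw [div_sub_div_same] at h
    have := div_eq_zero_iff.mp h
    simp at this; linarith
  -- recurrences for powers
  have hαrec : ∀ x : ℤ, α^(x+2) = p * α^(x+1) + q * α^x := by
    intro x
    rw [zpow_add₀ hα0 x 2, zpow_add₀ hα0 x 1, zpow_one, zpow_two]
    linear_combination α^x * hα2
  have hβrec : ∀ x : ℤ, β^(x+2) = p * β^(x+1) + q * β^x := by
    intro x
    rw [zpow_add₀ hβ0 x 2, zpow_add₀ hβ0 x 1, zpow_one, zpow_two]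
    linear_combination β^x * hβ2
  -- Binet, paired induction
  have binet : ∀ m : ℤ, (F m = (α^m - β^m)/(α-β) ∧ L m = α^m + β^m) ∧
      (F (m+1) = (α^(m+1) - β^(m+1))/(α-β) ∧ L (m+1) = α^(m+1) + β^(m+1)) := by
    intro m
    induction m using Int.induction_on with
    | zero =>
      refine ⟨⟨by rw [hF0]; norm_num, by rw [hL0]; norm_num⟩, ⟨?_, ?_⟩⟩
      · simp only [zero_add, zpow_one]; rw [hF1, div_self hd]
      · simp only [zero_add, zpow_one]; rw [hL1, hadd]
    | succ m ih =>
      obtain ⟨⟨hf0, hl0⟩, ⟨hf1, hl1⟩⟩ := ih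
      refine ⟨⟨hf1, hl1⟩, ?_, ?_⟩
      · have h := hF m
        rw [show ((m:ℤ)+1+1) = (m:ℤ)+2 by ring, h, hf1, hf0, hαrec, hβrec]; ring
      · have h := hL m
        rw [show ((m:ℤ)+1+1) = (m:ℤ)+2 by ring, h, hl1, hl0, hαrec, hβrec]; ring
    | pred m ih =>
      obtain ⟨⟨hf0, hl0⟩, ⟨hf1, hl1⟩⟩ := ih
      have e1 : (-(m:ℤ)-1) + 1 = -(m:ℤ) := by ring
      have h2 := hαrec (-(m:ℤ)-1)
      rw [show (-(m:ℤ)-1+2) = -(m:ℤ)+1 by ring, show (-(m:ℤ)-1+1) = -(m:ℤ) by ring] at h2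
      have h3 := hβrec (-(m:ℤ)-1)
      rw [show (-(m:ℤ)-1+2) = -(m:ℤ)+1 by ring, show (-(m:ℤ)-1+1) = -(m:ℤ) by ring] at h3
      refine ⟨⟨?_, ?_⟩, ?_, ?_⟩
      · have h := hF (-(m:ℤ)-1)
        rw [show (-(m:ℤ)-1+2) = -(m:ℤ)+1 by ring, show (-(m:ℤ)-1+1) = -(m:ℤ) by ring] at h
        refine mul_left_cancel₀ hq ?_
        linear_combination -h + hf1 - p*hf0 + (1/(α-β))*h2 - (1/(α-β))*h3
      · have h := hL (-(m:ℤ)-1)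
        rw [show (-(m:ℤ)-1+2) = -(m:ℤ)+1 by ring, show (-(m:ℤ)-1+1) = -(m:ℤ) by ring] at h
        refine mul_left_cancel₀ hq ?_
        linear_combination -h + hl1 - p*hl0 + h2 + h3
      · rw [e1]; exact hf0
      · rw [e1]; exact hl0
  have hFB : ∀ m : ℤ, F m = (α^m - β^m)/(α-β) := fun m => (binet m).1.1
  have hLB : ∀ m : ℤ, L m = α^m + β^m := fun m => (binet m).1.2
  have hqαβ : q = -(α*β) := by linarith [hmul]
  have hzA : ∀ (x c : ℤ), α^(x+c) = α^x * α^c := fun x c => zpow_add₀ hα0 x c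
  have hzB : ∀ (x c : ℤ), β^(x+c) = β^x * β^c := fun x c => zpow_add₀ hβ0 x c
  have hzA' : ∀ (x c : ℤ), α^(x-c) = α^x / α^c := fun x c => zpow_sub₀ hα0 x c
  have hzB' : ∀ (x c : ℤ), β^(x-c) = β^x / β^c := fun x c => zpow_sub₀ hβ0 x c
  have hnq : (-q)^(n+r) = α^n * α^r * (β^n * β^r) := by
    rw [← hmul, mul_zpow, hzA, hzB]
  have hαr0 : α^r ≠ 0 := zpow_ne_zero _ hα0
  have hβr0 : β^r ≠ 0 := zpow_ne_zero _ hβ0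
  obtain ⟨hi1, hi2, hi3, hi4⟩ : i.re = 0 ∧ i.imI = 1 ∧ i.imJ = 0 ∧ i.imK = 0 := by
    subst hi; exact ⟨rfl, rfl, rfl, rfl⟩
  obtain ⟨hj1, hj2, hj3, hj4⟩ : j.re = 0 ∧ j.imI = 0 ∧ j.imJ = 1 ∧ j.imK = 0 := by
    subst hj; exact ⟨rfl, rfl, rfl, rfl⟩
  obtain ⟨hk1, hk2, hk3, hk4⟩ : k.re = 0 ∧ k.imI = 0 ∧ k.imJ = 0 ∧ k.imK = 1 := by
    subst hk; exact ⟨rfl, rfl, rfl, rfl⟩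
  simp only [hQF, hQL]
  simp only [hFB, hLB, hqαβ, neg_neg, mul_zpow]
  simp only [show (3:ℤ) = 2+1 by norm_num, show (2:ℤ) = 1+1 by norm_num]
  simp only [hzA, hzB, hzA', hzB', zpow_one, zpow_zero]
  ext <;>
    simp only [Quaternion.re_mul, Quaternion.imI_mul, Quaternion.imJ_mul, Quaternion.imK_mul,
      Quaternion.re_add, Quaternion.imI_add, Quaternion.imJ_add, Quaternion.imK_add,
      Quaternion.re_sub, Quaternion.imI_sub, Quaternion.imJ_sub, Quaternion.imK_sub,
      Quaternion.re_coe, Quaternion.imI_coe, Quaternion.imJ_coe, Quaternion.imK_coe,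
      hi1, hi2, hi3, hi4, hj1, hj2, hj3, hj4, hk1, hk2, hk3, hk4] <;>
    field_simp <;>
    ring
end

section
/- In the real quaternions, α̲² = (Q_L(0) − r_{p,q}) + Δ·(Q_F(0) − s_{p,q}), where r_{p,q} = 1 + (p/2)(F(2) + F(4) + F(6)) + q(F(1) + F(3) + F(5)) and s_{p,q} = (1/2)(F(2) + F(4) + F(6)). -/
open Quaternion

theorem stmt_8 (p q : ℝ) (hpq : 0 < p^2 + 4*q)
    (α β : ℝ)
    (hα : α = (p + Real.sqrt (p^2 + 4*q)) / 2)
    (hβ : β = (p - Real.sqrt (p^2 + 4*q)) / 2)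
    (Δ : ℝ) (hΔ : Δ = α - β)
    (F : ℤ → ℝ) (hF0 : F 0 = 0) (hF1 : F 1 = 1)
    (hF : ∀ n : ℤ, F (n+2) = p * F (n+1) + q * F n)
    (L : ℤ → ℝ) (hL0 : L 0 = 2) (hL1 : L 1 = p)
    (hL : ∀ n : ℤ, L (n+2) = p * L (n+1) + q * L n)
    (i j k : ℍ[ℝ])
    (hi : i = ⟨0,1,0,0⟩) (hj : j = ⟨0,0,1,0⟩) (hk : k = ⟨0,0,0,1⟩)
    (QF : ℤ → ℍ[ℝ])
    (hQF : ∀ n : ℤ, QF n = ((F n : ℝ) : ℍ[ℝ]) + ((F (n+1) : ℝ) : ℍ[ℝ]) * i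
      + ((F (n+2) : ℝ) : ℍ[ℝ]) * j + ((F (n+3) : ℝ) : ℍ[ℝ]) * k)
    (QL : ℤ → ℍ[ℝ])
    (hQL : ∀ n : ℤ, QL n = ((L n : ℝ) : ℍ[ℝ]) + ((L (n+1) : ℝ) : ℍ[ℝ]) * i
      + ((L (n+2) : ℝ) : ℍ[ℝ]) * j + ((L (n+3) : ℝ) : ℍ[ℝ]) * k)
    (uα : ℍ[ℝ])
    (huα : uα = 1 + ((α : ℝ) : ℍ[ℝ]) * i + ((α^2 : ℝ) : ℍ[ℝ]) * j + ((α^3 : ℝ) : ℍ[ℝ]) * k)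
    (rpq spq : ℝ)
    (hrpq : rpq = 1 + (p/2) * (F 2 + F 4 + F 6) + q * (F 1 + F 3 + F 5))
    (hspq : spq = (1/2) * (F 2 + F 4 + F 6)) :
    uα ^ 2 = (QL 0 - ((rpq : ℝ) : ℍ[ℝ])) + ((Δ : ℝ) : ℍ[ℝ]) * (QF 0 - ((spq : ℝ) : ℍ[ℝ])) := by
  have hs2 : Real.sqrt (p^2+4*q) ^ 2 = p^2 + 4*q := Real.sq_sqrt hpq.le
  set s := Real.sqrt (p^2+4*q) with hsdef
  have hαv : α = (p + s)/2 := hα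
  have hΔs : Δ = s := by rw [hΔ, hα, hβ]; ring
  have hF2 : F 2 = p := by have := hF 0; norm_num [hF0, hF1] at this; linarith
  have hF3 : F 3 = p^2 + q := by have := hF 1; norm_num [hF1, hF2] at this; linarith
  have hF4 : F 4 = p^3 + 2*p*q := by
    have := hF 2; norm_num at this; linear_combination this + p * hF3 + q * hF2
  have hF5 : F 5 = p^4 + 3*p^2*q + q^2 := by
    have := hF 3; norm_num at this; linear_combination this + p * hF4 + q * hF3
  have hF6 : F 6 = p^5 + 4*p^3*q + 3*p*q^2 := by
    have := hF 4; norm_num at this; linear_combination this + p * hF5 + q * hF4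
  have hL2 : L 2 = p^2 + 2*q := by have := hL 0; norm_num [hL0, hL1] at this; linarith
  have hL3 : L 3 = p^3 + 3*p*q := by
    have := hL 1; norm_num at this; linear_combination this + p * hL2 + q * hL1
  have hi' : i.re = 0 ∧ i.imI = 1 ∧ i.imJ = 0 ∧ i.imK = 0 := by subst hi; exact ⟨rfl, rfl, rfl, rfl⟩
  have hj' : j.re = 0 ∧ j.imI = 0 ∧ j.imJ = 1 ∧ j.imK = 0 := by subst hj; exact ⟨rfl, rfl, rfl, rfl⟩
  have hk' : k.re = 0 ∧ k.imI = 0 ∧ k.imJ = 0 ∧ k.imK = 1 := by subst hk; exact ⟨rfl, rfl, rfl, rfl⟩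
  have hu : uα = ⟨1, α, α^2, α^3⟩ := by
    rw [huα]; ext <;> simp [-Quaternion.coe_pow, Quaternion.re_mul, Quaternion.imI_mul, Quaternion.imJ_mul, Quaternion.imK_mul, hi', hj', hk']
  have hu2 : uα ^ 2 = ⟨1 - α^2 - α^4 - α^6, 2*α, 2*α^2, 2*α^3⟩ := by
    have hur : uα.re = 1 ∧ uα.imI = α ∧ uα.imJ = α^2 ∧ uα.imK = α^3 := by rw [hu]; exact ⟨rfl, rfl, rfl, rfl⟩
    rw [sq]
    ext <;>
      simp only [Quaternion.re_mul, Quaternion.imI_mul, Quaternion.imJ_mul,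
        Quaternion.imK_mul, hur] <;> ring
  have hQF0 : QF 0 = ⟨F 0, F 1, F 2, F 3⟩ := by
    rw [hQF 0]; norm_num; ext <;> simp [Quaternion.re_mul, Quaternion.imI_mul, Quaternion.imJ_mul, Quaternion.imK_mul, hi', hj', hk']
  have hQL0 : QL 0 = ⟨L 0, L 1, L 2, L 3⟩ := by
    rw [hQL 0]; norm_num; ext <;> simp [Quaternion.re_mul, Quaternion.imI_mul, Quaternion.imJ_mul, Quaternion.imK_mul, hi', hj', hk']
  have hrhs : (QL 0 - ((rpq : ℝ) : ℍ[ℝ])) + ((Δ : ℝ) : ℍ[ℝ]) * (QF 0 - ((spq : ℝ) : ℍ[ℝ]))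
      = ⟨L 0 - rpq + Δ * (F 0 - spq), L 1 + Δ * F 1, L 2 + Δ * F 2, L 3 + Δ * F 3⟩ := by
    have hqf : (QF 0).re = F 0 ∧ (QF 0).imI = F 1 ∧ (QF 0).imJ = F 2 ∧ (QF 0).imK = F 3 := by rw [hQF0]; exact ⟨rfl, rfl, rfl, rfl⟩
    have hql : (QL 0).re = L 0 ∧ (QL 0).imI = L 1 ∧ (QL 0).imJ = L 2 ∧ (QL 0).imK = L 3 := by rw [hQL0]; exact ⟨rfl, rfl, rfl, rfl⟩
    ext <;>
      simp [Quaternion.re_mul, Quaternion.imI_mul, Quaternion.imJ_mul,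
        Quaternion.imK_mul, hqf, hql]
  rw [hu2, hrhs]
  have h1 : 1 - α^2 - α^4 - α^6 = L 0 - rpq + Δ * (F 0 - spq) := by
    rw [hαv, hΔs, hF0, hL0, hrpq, hspq, hF1, hF2, hF3, hF4, hF5, hF6]
    linear_combination ((-1/4 : ℝ) + (-1/16)*s^2 + (-1/64)*s^4 + (-1/4)*q + (-1/16)*q*s^2 + (-1/4)*q^2 + (-1/4)*p*s + (-3/32)*p*s^3 + (-3/8)*p*q*s + (-7/16)*p^2 + (-1/4)*p^2*s^2 + (-17/16)*p^2*q + (-13/32)*p^3*s + (-31/64)*p^4) * hs2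
  have h2 : 2*α = L 1 + Δ * F 1 := by
    rw [hαv, hΔs, hF1, hL1]; ring
  have h3 : 2*α^2 = L 2 + Δ * F 2 := by
    rw [hαv, hΔs, hF2, hL2]
    linear_combination (1/2 : ℝ) * hs2
  have h4 : 2*α^3 = L 3 + Δ * F 3 := by
    rw [hαv, hΔs, hF3, hL3]
    linear_combination ((1/4)*s + (3/4)*p) * hs2
  rw [h1, h2, h3, h4]
end

section
/- In the real quaternions, β̲² = (Q_L(0) − r_{p,q}) − Δ·(Q_F(0) − s_{p,q}), where r_{p,q} = 1 + (p/2)(F(2) + F(4) + F(6)) + q(F(1) + F(3) + F(5)) and s_{p,q} = (1/2)(F(2) + F(4) + F(6)). -/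
open Quaternion

set_option maxHeartbeats 1000000 in
theorem stmt_9 (p q : ℝ) (hpq : 0 < p^2 + 4*q)
    (α β : ℝ)
    (hα : α = (p + Real.sqrt (p^2 + 4*q)) / 2)
    (hβ : β = (p - Real.sqrt (p^2 + 4*q)) / 2)
    (Δ : ℝ) (hΔ : Δ = α - β)
    (F : ℤ → ℝ) (hF0 : F 0 = 0) (hF1 : F 1 = 1)
    (hF : ∀ n : ℤ, F (n+2) = p * F (n+1) + q * F n)
    (L : ℤ → ℝ) (hL0 : L 0 = 2) (hL1 : L 1 = p)
    (hL : ∀ n : ℤ, L (n+2) = p * L (n+1) + q * L n)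
    (i j k : ℍ[ℝ])
    (hi : i = ⟨0,1,0,0⟩) (hj : j = ⟨0,0,1,0⟩) (hk : k = ⟨0,0,0,1⟩)
    (QF : ℤ → ℍ[ℝ])
    (hQF : ∀ n : ℤ, QF n = ((F n : ℝ) : ℍ[ℝ]) + ((F (n+1) : ℝ) : ℍ[ℝ]) * i
      + ((F (n+2) : ℝ) : ℍ[ℝ]) * j + ((F (n+3) : ℝ) : ℍ[ℝ]) * k)
    (QL : ℤ → ℍ[ℝ])
    (hQL : ∀ n : ℤ, QL n = ((L n : ℝ) : ℍ[ℝ]) + ((L (n+1) : ℝ) : ℍ[ℝ]) * i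
      + ((L (n+2) : ℝ) : ℍ[ℝ]) * j + ((L (n+3) : ℝ) : ℍ[ℝ]) * k)
    (uβ : ℍ[ℝ])
    (huβ : uβ = 1 + ((β : ℝ) : ℍ[ℝ]) * i + ((β^2 : ℝ) : ℍ[ℝ]) * j + ((β^3 : ℝ) : ℍ[ℝ]) * k)
    (rpq spq : ℝ)
    (hrpq : rpq = 1 + (p/2) * (F 2 + F 4 + F 6) + q * (F 1 + F 3 + F 5))
    (hspq : spq = (1/2) * (F 2 + F 4 + F 6)) :
    uβ ^ 2 = (QL 0 - ((rpq : ℝ) : ℍ[ℝ])) - ((Δ : ℝ) : ℍ[ℝ]) * (QF 0 - ((spq : ℝ) : ℍ[ℝ])) := by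

  have hs : Real.sqrt (p^2+4*q) ^ 2 = p^2 + 4*q := Real.sq_sqrt hpq.le
  have hb2 : β^2 = p*β + q := by rw [hβ]; linear_combination hs/4
  have hb3 : β^3 = (p^2+q)*β + p*q := by linear_combination (β+p)*hb2
  have hΔ' : Δ = p - 2*β := by rw [hΔ, hα, hβ]; ring
  have hF2 : F 2 = p := by have h := hF 0; norm_num at h; rw [h, hF0, hF1]; ring
  have hF3 : F 3 = p^2 + q := by have h := hF 1; norm_num at h; rw [h, hF1, hF2]; ring
  have hF4 : F 4 = p^3 + 2*p*q := by have h := hF 2; norm_num at h; rw [h, hF2, hF3]; ring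
  have hF5 : F 5 = p^4 + 3*p^2*q + q^2 := by have h := hF 3; norm_num at h; rw [h, hF3, hF4]; ring
  have hF6 : F 6 = p^5 + 4*p^3*q + 3*p*q^2 := by have h := hF 4; norm_num at h; rw [h, hF4, hF5]; ring
  have hL2 : L 2 = p^2 + 2*q := by have h := hL 0; norm_num at h; rw [h, hL0, hL1]; ring
  have hL3 : L 3 = p^3 + 3*p*q := by have h := hL 1; norm_num at h; rw [h, hL1, hL2]; ring
  have hr : rpq = 1 + (p/2)*(p + (p^3+2*p*q) + (p^5+4*p^3*q+3*p*q^2))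
      + q*(1 + (p^2+q) + (p^4+3*p^2*q+q^2)) := by
    rw [hrpq, hF1, hF2, hF3, hF4, hF5, hF6]
  have hsp : spq = (1/2)*(p + (p^3+2*p*q) + (p^5+4*p^3*q+3*p*q^2)) := by
    rw [hspq, hF2, hF4, hF6]
  have hic : i.re = 0 ∧ i.imI = 1 ∧ i.imJ = 0 ∧ i.imK = 0 := by subst hi; exact ⟨rfl, rfl, rfl, rfl⟩
  have hjc : j.re = 0 ∧ j.imI = 0 ∧ j.imJ = 1 ∧ j.imK = 0 := by subst hj; exact ⟨rfl, rfl, rfl, rfl⟩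
  have hkc : k.re = 0 ∧ k.imI = 0 ∧ k.imJ = 0 ∧ k.imK = 1 := by subst hk; exact ⟨rfl, rfl, rfl, rfl⟩
  rw [huβ, hQF 0, hQL 0, hb2, hb3, hΔ',
    show (0:ℤ)+1 = 1 by norm_num, show (0:ℤ)+2 = 2 by norm_num, show (0:ℤ)+3 = 3 by norm_num,
    hF0, hF1, hF2, hF3, hL0, hL1, hL2, hL3, sq]
  ext <;> simp [← Quaternion.coe_pow, Quaternion.re_mul, Quaternion.imI_mul, Quaternion.imJ_mul,
    Quaternion.imK_mul, hic, hjc, hkc] <;>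
    first
      | ring1
      | linear_combination (-(1 + p^2 + (p^2+q)^2)) * hb2 - hr + (p - 2*β) * hsp
      | linear_combination (-(1 + p^2 + (p^2+q)^2)) * hb2 + hr - (p - 2*β) * hsp
end

section
/- For all integers n and m (with q ≠ 0), the commutator of a (p,q)-Fibonacci quaternion and a generalized Fibonacci quaternion satisfies Q_F(n)·Q_w(m) − Q_w(m)·Q_F(n) = 2·(−q)^(n+1)·ω·W(m−n). -/
open Quaternion

theorem stmt_11 (p q : ℝ) (hpq : 0 < p^2 + 4*q)
    (hq : q ≠ 0)
    (α β : ℝ)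
    (hα : α = (p + Real.sqrt (p^2 + 4*q)) / 2)
    (hβ : β = (p - Real.sqrt (p^2 + 4*q)) / 2)
    (F : ℤ → ℝ) (hF0 : F 0 = 0) (hF1 : F 1 = 1)
    (hF : ∀ n : ℤ, F (n+2) = p * F (n+1) + q * F n)
    (a b : ℝ) (W : ℤ → ℝ) (hW0 : W 0 = a) (hW1 : W 1 = b)
    (hW : ∀ n : ℤ, W (n+2) = p * W (n+1) + q * W n)
    (i j k : ℍ[ℝ])
    (hi : i = ⟨0,1,0,0⟩) (hj : j = ⟨0,0,1,0⟩) (hk : k = ⟨0,0,0,1⟩)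
    (QF : ℤ → ℍ[ℝ])
    (hQF : ∀ n : ℤ, QF n = ((F n : ℝ) : ℍ[ℝ]) + ((F (n+1) : ℝ) : ℍ[ℝ]) * i
      + ((F (n+2) : ℝ) : ℍ[ℝ]) * j + ((F (n+3) : ℝ) : ℍ[ℝ]) * k)
    (Qw : ℤ → ℍ[ℝ])
    (hQw : ∀ n : ℤ, Qw n = ((W n : ℝ) : ℍ[ℝ]) + ((W (n+1) : ℝ) : ℍ[ℝ]) * i
      + ((W (n+2) : ℝ) : ℍ[ℝ]) * j + ((W (n+3) : ℝ) : ℍ[ℝ]) * k)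
    (ω : ℍ[ℝ]) (hω : ω = ((q : ℝ) : ℍ[ℝ]) * i + ((p : ℝ) : ℍ[ℝ]) * j - k)
    (n m : ℤ) :
    QF n * Qw m - Qw m * QF n = ((2 * (-q)^(n+1) : ℝ) : ℍ[ℝ]) * ω * ((W (m-n) : ℝ) : ℍ[ℝ]) := by
  have hq' : (-q) ≠ 0 := neg_ne_zero.mpr hq
  have key : ∀ N m : ℤ, F (N+1) * W m - F N * W (m+1) = (-q)^N * W (m - N) := by
    intro N
    induction N using Int.induction_on with
    | zero => intro m; norm_num [hF0, hF1]
    | succ n ih =>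
        intro m
        have ih' := ih (m-1)
        rw [show m-1+1 = m by ring] at ih'
        have e1 : F ((n:ℤ)+1+1) = p * F ((n:ℤ)+1) + q * F (n:ℤ) := by
          have h := hF n
          rw [show (n:ℤ)+2 = (n:ℤ)+1+1 by ring] at h; exact h
        have e2 : W (m+1) = p * W m + q * W (m-1) := by
          have h := hW (m-1)
          rw [show m-1+2 = m+1 by ring, show m-1+1 = m by ring] at h; exact h
        rw [show m - ((n:ℤ)+1) = m-1-(n:ℤ) by ring, zpow_add_one₀ hq', e1, e2]
        linear_combination (-q) * ih'
    | pred n ih =>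
        intro m
        have ih' := ih (m+1)
        have e1 : F (-(n:ℤ)+1) = p * F (-(n:ℤ)) + q * F (-(n:ℤ)-1) := by
          have h := hF (-(n:ℤ)-1)
          rw [show -(n:ℤ)-1+2 = -(n:ℤ)+1 by ring, show -(n:ℤ)-1+1 = -(n:ℤ) by ring] at h
          exact h
        have ez : (-q)^(-(n:ℤ)) = (-q)^(-(n:ℤ)-1) * (-q) := by
          rw [← zpow_add_one₀ hq']; ring_nf
        rw [show m+1+1 = m+2 by ring, e1, hW m, ez,
          show m+1 - -(n:ℤ) = m - (-(n:ℤ)-1) by ring] at ih'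
        rw [show -(n:ℤ)-1+1 = -(n:ℤ) by ring]
        refine mul_left_cancel₀ hq' ?_
        linear_combination ih'
  -- instances of key with normalized indices
  have h1 := key (n+1) (m+1)
  rw [show m+1-(n+1) = m-n by ring, show n+1+1 = n+2 by ring, show m+1+1 = m+2 by ring] at h1
  have h2 := key (n+2) (m+2)
  rw [show m+2-(n+2) = m-n by ring, show n+2+1 = n+3 by ring, show m+2+1 = m+3 by ring,
    show (n:ℤ)+2 = (n+1)+1 by ring, zpow_add_one₀ hq', show (n:ℤ)+1+1 = n+2 by ring] at h2
  have eF : F (n+3) = p * F (n+2) + q * F (n+1) := by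
    have h := hF (n+1)
    rw [show (n:ℤ)+1+2 = n+3 by ring, show (n:ℤ)+1+1 = n+2 by ring] at h; exact h
  have eW : W (m+3) = p * W (m+2) + q * W (m+1) := by
    have h := hW (m+1)
    rw [show m+1+2 = m+3 by ring, show m+1+1 = m+2 by ring] at h; exact h
  obtain ⟨hi1, hi2, hi3, hi4⟩ := QuaternionAlgebra.ext_iff.mp hi
  obtain ⟨hj1, hj2, hj3, hj4⟩ := QuaternionAlgebra.ext_iff.mp hj
  obtain ⟨hk1, hk2, hk3, hk4⟩ := QuaternionAlgebra.ext_iff.mp hk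
  subst hω
  rw [hQF, hQw]
  ext <;>
    simp only [Quaternion.re_mul, Quaternion.imI_mul, Quaternion.imJ_mul, Quaternion.imK_mul,
      Quaternion.re_add, Quaternion.imI_add, Quaternion.imJ_add, Quaternion.imK_add,
      Quaternion.re_sub, Quaternion.imI_sub, Quaternion.imJ_sub, Quaternion.imK_sub,
      Quaternion.re_coe, Quaternion.imI_coe, Quaternion.imJ_coe, Quaternion.imK_coe,
      hi1, hi2, hi3, hi4, hj1, hj2, hj3, hj4, hk1, hk2, hk3, hk4]
  · ring
  · linear_combination (-2 : ℝ) * h2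
  · linear_combination 2 * W (m+1) * eF - 2 * F (n+1) * eW + 2 * p * h1
  · linear_combination (-2 : ℝ) * h1
end

section
/- For every integer n (with q ≠ 0): Q_F(n)·Q_w(n) − Q_w(n)·Q_F(n) = 2·(−q)^(n+1)·a·ω. -/
open Quaternion

theorem stmt_12 (p q : ℝ) (hpq : 0 < p^2 + 4*q)
    (hq : q ≠ 0)
    (F : ℤ → ℝ) (hF0 : F 0 = 0) (hF1 : F 1 = 1)
    (hF : ∀ n : ℤ, F (n+2) = p * F (n+1) + q * F n)
    (a b : ℝ) (W : ℤ → ℝ) (hW0 : W 0 = a) (hW1 : W 1 = b)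
    (hW : ∀ n : ℤ, W (n+2) = p * W (n+1) + q * W n)
    (i j k : ℍ[ℝ])
    (hi : i = ⟨0,1,0,0⟩) (hj : j = ⟨0,0,1,0⟩) (hk : k = ⟨0,0,0,1⟩)
    (QF : ℤ → ℍ[ℝ])
    (hQF : ∀ n : ℤ, QF n = ((F n : ℝ) : ℍ[ℝ]) + ((F (n+1) : ℝ) : ℍ[ℝ]) * i
      + ((F (n+2) : ℝ) : ℍ[ℝ]) * j + ((F (n+3) : ℝ) : ℍ[ℝ]) * k)
    (Qw : ℤ → ℍ[ℝ])
    (hQw : ∀ n : ℤ, Qw n = ((W n : ℝ) : ℍ[ℝ]) + ((W (n+1) : ℝ) : ℍ[ℝ]) * i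
      + ((W (n+2) : ℝ) : ℍ[ℝ]) * j + ((W (n+3) : ℝ) : ℍ[ℝ]) * k)
    (ω : ℍ[ℝ]) (hω : ω = ((q : ℝ) : ℍ[ℝ]) * i + ((p : ℝ) : ℍ[ℝ]) * j - k)
    (n : ℤ) :
    QF n * Qw n - Qw n * QF n = ((2 * (-q)^(n+1) * a : ℝ) : ℍ[ℝ]) * ω := by
  have hq' : (-q : ℝ) ≠ 0 := neg_ne_zero.mpr hq
  have hD : ∀ m : ℤ, F (m+1) * W m - F m * W (m+1) = a * (-q)^m := by
    intro m
    induction m using Int.induction_on with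
    | zero => simp [hF0, hF1, hW0]
    | succ m ih =>
        have h1 := hF m
        have h2 := hW m
        rw [show ((m:ℤ)+1+1) = (m:ℤ)+2 by ring, show ((m:ℤ)+1) = (m:ℤ)+1 by ring,
          zpow_add_one₀ hq']
        have : F ((m:ℤ)+2) * W ((m:ℤ)+1) - F ((m:ℤ)+1) * W ((m:ℤ)+2)
            = a * (-q)^(m:ℤ) * (-q) := by
          linear_combination W ((m:ℤ)+1) * h1 - F ((m:ℤ)+1) * h2 - q * ih
        linarith [this]
    | pred m ih =>
        have h1 := hF (-(m:ℤ)-1)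
        have h2 := hW (-(m:ℤ)-1)
        have hz : (-q)^(-(m:ℤ)-1) * (-q) = (-q)^(-(m:ℤ)) := by
          rw [← zpow_add_one₀ hq']
          ring_nf
        have hn1 : (-(m:ℤ)-1+2) = -(m:ℤ)+1 := by ring
        have hn2 : (-(m:ℤ)-1+1) = -(m:ℤ) := by ring
        rw [hn1, hn2] at h1 h2
        rw [hn2]
        have key : (F (-(m:ℤ)) * W (-(m:ℤ)-1) - F (-(m:ℤ)-1) * W (-(m:ℤ))) * (-q)
            = a * (-q)^(-(m:ℤ)) := by
          linear_combination -W (-(m:ℤ)) * h1 + F (-(m:ℤ)) * h2 + ih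
        apply mul_right_cancel₀ hq'
        rw [key, mul_assoc, hz]
  have h1 := hF (n+1)
  have h2 := hW (n+1)
  have hn3 : (n+1+2) = n+3 := by ring
  have hn2 : (n+1+1) = n+2 := by ring
  rw [hn3, hn2] at h1 h2
  have hD1 := hD (n+1)
  rw [hn2] at hD1
  have ci : i.re = 0 ∧ i.imI = 1 ∧ i.imJ = 0 ∧ i.imK = 0 := by subst hi; exact ⟨rfl, rfl, rfl, rfl⟩
  have cj : j.re = 0 ∧ j.imI = 0 ∧ j.imJ = 1 ∧ j.imK = 0 := by subst hj; exact ⟨rfl, rfl, rfl, rfl⟩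
  have ck : k.re = 0 ∧ k.imI = 0 ∧ k.imJ = 0 ∧ k.imK = 1 := by subst hk; exact ⟨rfl, rfl, rfl, rfl⟩
  obtain ⟨ci1, ci2, ci3, ci4⟩ := ci
  obtain ⟨cj1, cj2, cj3, cj4⟩ := cj
  obtain ⟨ck1, ck2, ck3, ck4⟩ := ck
  subst hω
  rw [hQF n, hQw n]
  ext <;>
    simp only [Quaternion.re_mul, Quaternion.imI_mul, Quaternion.imJ_mul, Quaternion.imK_mul,
      Quaternion.re_add, Quaternion.imI_add, Quaternion.imJ_add, Quaternion.imK_add,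
      Quaternion.re_sub, Quaternion.imI_sub, Quaternion.imJ_sub, Quaternion.imK_sub,
      Quaternion.re_coe, Quaternion.imI_coe, Quaternion.imJ_coe, Quaternion.imK_coe,
      ci1, ci2, ci3, ci4, cj1, cj2, cj3, cj4, ck1, ck2, ck3, ck4] <;>
    rw [h1, h2] <;>
    first
      | ring1
      | linear_combination (2*q) * hD1
      | linear_combination (-2*q) * hD1
      | linear_combination (2*p) * hD1
      | linear_combination (-2*p) * hD1
      | linear_combination (2:ℝ) * hD1
      | linear_combination (-2:ℝ) * hD1
end

section
/- (Binet formula for generalized Fibonacci quaternions) For every integer n (with q ≠ 0): Q_w(n) = (A·α̲·α^n − B·β̲·β^n)/(α − β), where A = b − aβ and B = b − aα. -/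
open Quaternion

set_option maxHeartbeats 1000000 in
theorem stmt_13 (p q : ℝ) (hpq : 0 < p^2 + 4*q)
    (hq : q ≠ 0)
    (α β : ℝ)
    (hα : α = (p + Real.sqrt (p^2 + 4*q)) / 2)
    (hβ : β = (p - Real.sqrt (p^2 + 4*q)) / 2)
    (a b : ℝ) (W : ℤ → ℝ) (hW0 : W 0 = a) (hW1 : W 1 = b)
    (hW : ∀ n : ℤ, W (n+2) = p * W (n+1) + q * W n)
    (A B : ℝ) (hA : A = b - a * β) (hB : B = b - a * α)
    (i j k : ℍ[ℝ])
    (hi : i = ⟨0,1,0,0⟩) (hj : j = ⟨0,0,1,0⟩) (hk : k = ⟨0,0,0,1⟩)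
    (Qw : ℤ → ℍ[ℝ])
    (hQw : ∀ n : ℤ, Qw n = ((W n : ℝ) : ℍ[ℝ]) + ((W (n+1) : ℝ) : ℍ[ℝ]) * i
      + ((W (n+2) : ℝ) : ℍ[ℝ]) * j + ((W (n+3) : ℝ) : ℍ[ℝ]) * k)
    (uα : ℍ[ℝ])
    (huα : uα = 1 + ((α : ℝ) : ℍ[ℝ]) * i + ((α^2 : ℝ) : ℍ[ℝ]) * j + ((α^3 : ℝ) : ℍ[ℝ]) * k)
    (uβ : ℍ[ℝ])
    (huβ : uβ = 1 + ((β : ℝ) : ℍ[ℝ]) * i + ((β^2 : ℝ) : ℍ[ℝ]) * j + ((β^3 : ℝ) : ℍ[ℝ]) * k)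
    (n : ℤ) :
    Qw n = (((A : ℝ) : ℍ[ℝ]) * uα * ((α^n : ℝ) : ℍ[ℝ])
      - ((B : ℝ) : ℍ[ℝ]) * uβ * ((β^n : ℝ) : ℍ[ℝ])) / (((α - β : ℝ)) : ℍ[ℝ]) := by
  -- basic facts about α, β
  set s := Real.sqrt (p^2 + 4*q) with hs
  have hs2 : s^2 = p^2 + 4*q := Real.sq_sqrt hpq.le
  have hspos : 0 < s := Real.sqrt_pos.mpr hpq
  have hd : α - β = s := by rw [hα, hβ]; ring
  have hdne : α - β ≠ 0 := by rw [hd]; exact hspos.ne'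
  have hmul : α * β = -q := by
    rw [hα, hβ]
    have : (p + s)/2 * ((p - s)/2) = (p^2 - s^2)/4 := by ring
    rw [this, hs2]; ring
  have hα0 : α ≠ 0 := by
    intro h; apply hq; have := hmul; rw [h, zero_mul] at this; linarith [this]
  have hβ0 : β ≠ 0 := by
    intro h; apply hq; have := hmul; rw [h, mul_zero] at this; linarith [this]
  have hαsq : α^2 = p * α + q := by
    rw [hα]; field_simp; nlinarith [hs2]
  have hβsq : β^2 = p * β + q := by
    rw [hβ]; field_simp; nlinarith [hs2]
  -- V and its recurrence
  set V : ℤ → ℝ := fun m => (A * α ^ m - B * β ^ m) / (α - β) with hV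
  have hα2 : ∀ m : ℤ, α ^ (m + 2) = p * α ^ (m + 1) + q * α ^ m := by
    intro m
    have h1 : α ^ (m + 1) = α ^ m * α := zpow_add_one₀ hα0 m
    have h2 : α ^ (m + 2) = α ^ (m + 1) * α := by
      rw [show m + 2 = (m + 1) + 1 by ring]; exact zpow_add_one₀ hα0 (m+1)
    rw [h2, h1]
    have h3 : α * α = p * α + q := by linear_combination hαsq
    linear_combination α ^ m * h3
  have hβ2 : ∀ m : ℤ, β ^ (m + 2) = p * β ^ (m + 1) + q * β ^ m := by
    intro m
    have h1 : β ^ (m + 1) = β ^ m * β := zpow_add_one₀ hβ0 m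
    have h2 : β ^ (m + 2) = β ^ (m + 1) * β := by
      rw [show m + 2 = (m + 1) + 1 by ring]; exact zpow_add_one₀ hβ0 (m+1)
    rw [h2, h1]
    have h3 : β * β = p * β + q := by linear_combination hβsq
    linear_combination β ^ m * h3
  have hVrec : ∀ m : ℤ, V (m + 2) = p * V (m + 1) + q * V m := by
    intro m
    simp only [hV]
    rw [hα2 m, hβ2 m]
    field_simp
    ring
  -- Binet
  have binet : ∀ m : ℤ, W m = V m := by
    have key : ∀ m : ℤ, W m = V m ∧ W (m + 1) = V (m + 1) := by
      intro m
      induction m using Int.induction_on with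
      | zero =>
        constructor
        · simp only [hV, zpow_zero, hW0, hA, hB]
          field_simp; ring
        · have : (0:ℤ) + 1 = 1 := by ring
          rw [this, hW1]
          simp only [hV, zpow_one, hA, hB]
          field_simp; ring
      | succ m ih =>
        obtain ⟨ih0, ih1⟩ := ih
        refine ⟨ih1, ?_⟩
        have e1 : ((m:ℤ) + 1) + 1 = (m:ℤ) + 2 := by ring
        rw [e1, hW m, hVrec m, ih0, ih1]
      | pred m ih =>
        obtain ⟨ih0, ih1⟩ := ih
        have e1 : (-(m:ℤ) - 1) + 1 = -(m:ℤ) := by ring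
        refine ⟨?_, by rw [e1]; exact ih0⟩
        have hWr := hW (-(m:ℤ) - 1)
        have hVr := hVrec (-(m:ℤ) - 1)
        have e2 : (-(m:ℤ) - 1) + 2 = -(m:ℤ) + 1 := by ring
        have e3 : (-(m:ℤ) - 1) + 1 = -(m:ℤ) := by ring
        rw [e2, e3] at hWr hVr
        rw [ih0, ih1, hVr] at hWr
        have : q * W (-(m:ℤ) - 1) = q * V (-(m:ℤ) - 1) := by linarith
        exact mul_left_cancel₀ hq this
    exact fun m => (key m).1
  -- zpow expansions
  have ea1 : α ^ (n + 1) = α ^ n * α := zpow_add_one₀ hα0 n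
  have ea2 : α ^ (n + 2) = α ^ n * α ^ 2 := by
    rw [show n + 2 = n + ((2:ℕ):ℤ) by norm_num, zpow_add₀ hα0, zpow_natCast]
  have ea3 : α ^ (n + 3) = α ^ n * α ^ 3 := by
    rw [show n + 3 = n + ((3:ℕ):ℤ) by norm_num, zpow_add₀ hα0, zpow_natCast]
  have eb1 : β ^ (n + 1) = β ^ n * β := zpow_add_one₀ hβ0 n
  have eb2 : β ^ (n + 2) = β ^ n * β ^ 2 := by
    rw [show n + 2 = n + ((2:ℕ):ℤ) by norm_num, zpow_add₀ hβ0, zpow_natCast]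
  have eb3 : β ^ (n + 3) = β ^ n * β ^ 3 := by
    rw [show n + 3 = n + ((3:ℕ):ℤ) by norm_num, zpow_add₀ hβ0, zpow_natCast]
  -- finish componentwise
  have ci : i.re = 0 ∧ i.imI = 1 ∧ i.imJ = 0 ∧ i.imK = 0 := by subst hi; exact ⟨rfl, rfl, rfl, rfl⟩
  have cj : j.re = 0 ∧ j.imI = 0 ∧ j.imJ = 1 ∧ j.imK = 0 := by subst hj; exact ⟨rfl, rfl, rfl, rfl⟩
  have ck : k.re = 0 ∧ k.imI = 0 ∧ k.imJ = 0 ∧ k.imK = 1 := by subst hk; exact ⟨rfl, rfl, rfl, rfl⟩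
  rw [hQw n, huα, huβ,
    binet n, binet (n+1), binet (n+2), binet (n+3)]
  simp only [hV, ea1, ea2, ea3, eb1, eb2, eb3]
  rw [div_eq_mul_inv (((A:ℍ[ℝ]) * _ * _ - _)), ← Quaternion.coe_inv]
  ext <;>
    simp only [Quaternion.re_mul, Quaternion.imI_mul, Quaternion.imJ_mul, Quaternion.imK_mul,
      Quaternion.re_add, Quaternion.imI_add, Quaternion.imJ_add, Quaternion.imK_add,
      Quaternion.re_sub, Quaternion.imI_sub, Quaternion.imJ_sub, Quaternion.imK_sub,
      Quaternion.re_one, Quaternion.imI_one, Quaternion.imJ_one, Quaternion.imK_one,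
      Quaternion.re_coe, Quaternion.imI_coe, Quaternion.imJ_coe, Quaternion.imK_coe,
      ci.1, ci.2.1, ci.2.2.1, ci.2.2.2, cj.1, cj.2.1, cj.2.2.1, cj.2.2.2,
      ck.1, ck.2.1, ck.2.2.1, ck.2.2.2] <;>
    field_simp <;> ring
end

section
/- (Binet formula for (p,q)-Lucas quaternions) For every integer n (with q ≠ 0): Q_L(n) = α̲·α^n + β̲·β^n. -/
open Quaternion

lemma aux_rec (x p q : ℝ) (hx : x ≠ 0) (h2 : x^2 = p*x + q) (m : ℤ) :
    x^(m+2) = p * x^(m+1) + q * x^m := by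
  have h1 : x^(m+1) = x^m * x := by rw [zpow_add_one₀ hx]
  have h2' : x^(m+2) = x^m * x * x := by
    rw [show m+2 = m+1+1 by ring, zpow_add_one₀ hx, h1]
  rw [h2', h1]
  linear_combination (x^m) * h2

theorem stmt_14 (p q : ℝ) (hpq : 0 < p^2 + 4*q)
    (hq : q ≠ 0)
    (α β : ℝ)
    (hα : α = (p + Real.sqrt (p^2 + 4*q)) / 2)
    (hβ : β = (p - Real.sqrt (p^2 + 4*q)) / 2)
    (L : ℤ → ℝ) (hL0 : L 0 = 2) (hL1 : L 1 = p)
    (hL : ∀ n : ℤ, L (n+2) = p * L (n+1) + q * L n)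
    (i j k : ℍ[ℝ])
    (hi : i = ⟨0,1,0,0⟩) (hj : j = ⟨0,0,1,0⟩) (hk : k = ⟨0,0,0,1⟩)
    (QL : ℤ → ℍ[ℝ])
    (hQL : ∀ n : ℤ, QL n = ((L n : ℝ) : ℍ[ℝ]) + ((L (n+1) : ℝ) : ℍ[ℝ]) * i
      + ((L (n+2) : ℝ) : ℍ[ℝ]) * j + ((L (n+3) : ℝ) : ℍ[ℝ]) * k)
    (uα : ℍ[ℝ])
    (huα : uα = 1 + ((α : ℝ) : ℍ[ℝ]) * i + ((α^2 : ℝ) : ℍ[ℝ]) * j + ((α^3 : ℝ) : ℍ[ℝ]) * k)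
    (uβ : ℍ[ℝ])
    (huβ : uβ = 1 + ((β : ℝ) : ℍ[ℝ]) * i + ((β^2 : ℝ) : ℍ[ℝ]) * j + ((β^3 : ℝ) : ℍ[ℝ]) * k)
    (n : ℤ) :
    QL n = uα * ((α^n : ℝ) : ℍ[ℝ]) + uβ * ((β^n : ℝ) : ℍ[ℝ]) := by
  have hs : Real.sqrt (p^2+4*q) ^ 2 = p^2+4*q := Real.sq_sqrt hpq.le
  have hα2 : α^2 = p*α + q := by subst hα; linear_combination hs/4
  have hβ2 : β^2 = p*β + q := by subst hβ; linear_combination hs/4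
  have hprod : α * β = -q := by subst hα hβ; linear_combination -hs/4
  have hαne : α ≠ 0 := by
    intro h; apply hq; have := hprod; rw [h] at this; simpa using this.symm
  have hβne : β ≠ 0 := by
    intro h; apply hq; have := hprod; rw [h] at this; simp at this; linarith
  have hsum : α + β = p := by subst hα hβ; ring
  have hra := aux_rec α p q hαne hα2
  have hrb := aux_rec β p q hβne hβ2
  -- Binet for L
  have key : ∀ m : ℤ, L m = α^m + β^m ∧ L (m+1) = α^(m+1) + β^(m+1) := by
    intro m
    induction m using Int.induction_on with
    | zero =>
      constructor
      · norm_num [hL0]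
      · norm_num [hL1, hsum]
    | succ m ih =>
      refine ⟨ih.2, ?_⟩
      have := hL m
      rw [show (m:ℤ)+1+1 = m+2 by ring, this, ih.1, ih.2, hra m, hrb m]
      ring
    | pred m ih =>
      have e1 : (-(m:ℤ)-1)+1 = -m := by ring
      have e2 : (-(m:ℤ)-1)+2 = -m+1 := by ring
      refine ⟨?_, by rw [e1]; exact ih.1⟩
      have h := hL (-(m:ℤ)-1)
      rw [e1, e2, ih.1, ih.2] at h
      have ha := hra (-(m:ℤ)-1); rw [e1, e2] at ha
      have hb := hrb (-(m:ℤ)-1); rw [e1, e2] at hb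
      have hc : q * L (-(m:ℤ)-1) = q * (α ^ (-(m:ℤ)-1) + β ^ (-(m:ℤ)-1)) := by
        linear_combination ha + hb - h
      exact mul_left_cancel₀ hq hc
  have k0 := (key n).1
  have k1 := (key n).2
  have k2 := (key (n+1)).2
  have k3 := (key (n+2)).2
  rw [show (n:ℤ)+1+1 = n+2 by ring] at k2
  rw [show (n:ℤ)+2+1 = n+3 by ring] at k3
  have pa1 : α^(n+1) = α * α^n := by rw [zpow_add_one₀ hαne]; ring
  have pb1 : β^(n+1) = β * β^n := by rw [zpow_add_one₀ hβne]; ring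
  have pa2 : α^(n+2) = α^2 * α^n := by
    rw [show (n:ℤ)+2 = n+1+1 by ring, zpow_add_one₀ hαne, pa1]; ring
  have pb2 : β^(n+2) = β^2 * β^n := by
    rw [show (n:ℤ)+2 = n+1+1 by ring, zpow_add_one₀ hβne, pb1]; ring
  have pa3 : α^(n+3) = α^3 * α^n := by
    rw [show (n:ℤ)+3 = n+2+1 by ring, zpow_add_one₀ hαne, pa2]; ring
  have pb3 : β^(n+3) = β^3 * β^n := by
    rw [show (n:ℤ)+3 = n+2+1 by ring, zpow_add_one₀ hβne, pb2]; ring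
  rw [hQL n, huα, huβ, k0, k1, k2, k3, pa1, pb1, pa2, pb2, pa3, pb3]
  obtain ⟨i1, i2, i3, i4⟩ : i.re = 0 ∧ i.imI = 1 ∧ i.imJ = 0 ∧ i.imK = 0 := by
    subst hi; exact ⟨rfl, rfl, rfl, rfl⟩
  obtain ⟨j1, j2, j3, j4⟩ : j.re = 0 ∧ j.imI = 0 ∧ j.imJ = 1 ∧ j.imK = 0 := by
    subst hj; exact ⟨rfl, rfl, rfl, rfl⟩
  obtain ⟨k1, k2, k3, k4⟩ : k.re = 0 ∧ k.imI = 0 ∧ k.imJ = 0 ∧ k.imK = 1 := by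
    subst hk; exact ⟨rfl, rfl, rfl, rfl⟩
  generalize α^n = A
  generalize β^n = B
  ext <;>
    simp only [Quaternion.re_add, Quaternion.imI_add, Quaternion.imJ_add, Quaternion.imK_add,
      Quaternion.re_mul, Quaternion.imI_mul, Quaternion.imJ_mul, Quaternion.imK_mul,
      Quaternion.re_coe, Quaternion.imI_coe, Quaternion.imJ_coe, Quaternion.imK_coe,
      Quaternion.re_one, Quaternion.imI_one, Quaternion.imJ_one, Quaternion.imK_one,
      i1, i2, i3, i4, j1, j2, j3, j4, k1, k2, k3, k4] <;>
    ring
end
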